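/- arXiv:math/0501373 — 8 statements merged into one kernel-verified Lean document; each statement's English description precedes it below -/
import Mathlib

section
/- Let L be a bounded lattice and let a be a central element of L (i.e., a is neutral and complemented). Then the center of the interval [0,a] equals the intersection of the center of L with [0,a]. -/
universe u

/-- An element `a` of a lattice is *neutral* if every triple `{a, x, y}`
generates a distributive sublattice; we use the standard equational
characterization. -/
def IsNeutral {L : Type*} [Lattice L] (a : L) : Prop :=
  ∀ x y : L, (a ⊔ x) ⊓ (a ⊔ y) ⊓ (x ⊔ y) = (a ⊓ x) ⊔ (a ⊓ y) ⊔ (x ⊓ y)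

/-- An element of a bounded lattice is *central* if it is neutral and complemented. -/
def IsCentral {L : Type*} [Lattice L] [BoundedOrder L] (a : L) : Prop :=
  IsNeutral a ∧ ∃ b : L, a ⊓ b = ⊥ ∧ a ⊔ b = ⊤

/-- `a` is an atom of the center `Cen L`. -/
def IsCenterAtom {L : Type*} [Lattice L] [BoundedOrder L] (a : L) : Prop :=
  IsCentral a ∧ a ≠ ⊥ ∧ ∀ b : L, IsCentral b → b < a → b = ⊥

/-- A bounded lattice is *directly indecomposable* if whenever it is isomorphic to a
product of two bounded lattices, one of the factors is trivial. -/
def DirectlyIndecomposable (M : Type u) [Lattice M] [BoundedOrder M] : Prop :=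
  ∀ A B : BddLat.{u}, Nonempty (M ≃o ↥A × ↥B) → Subsingleton ↥A ∨ Subsingleton ↥B

/-- A bounded lattice is *totally decomposable* if it is isomorphic to a direct product
of directly indecomposable lattices. -/
def TotallyDecomposable (M : Type u) [Lattice M] [BoundedOrder M] : Prop :=
  ∃ (ι : Type u) (F : ι → BddLat.{u}),
    (∀ i, DirectlyIndecomposable ↥(F i)) ∧ Nonempty (M ≃o ∀ i, ↥(F i))

section aux
variable {L : Type*} [Lattice L]

theorem IsNeutral.inf_sup_aux {a : L} (ha : IsNeutral a) (x y : L) :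
    a ⊓ ((a ⊓ x) ⊔ y) = (a ⊓ x) ⊔ (a ⊓ y) := by
  have h := ha (a ⊓ x) y
  rw [sup_inf_self, inf_sup_self] at h
  rw [show a ⊓ (a ⊓ x) = a ⊓ x by rw [← inf_assoc, inf_idem]] at h
  rw [show (a ⊓ x) ⊔ (a ⊓ y) ⊔ (a ⊓ x ⊓ y) = (a ⊓ x) ⊔ (a ⊓ y) from
    sup_eq_left.mpr ((inf_le_left (b := y)).trans le_sup_left)] at h
  exact h

theorem IsNeutral.inf_sup_distrib {a : L} (ha : IsNeutral a) (x y : L) :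
    a ⊓ (x ⊔ y) = (a ⊓ x) ⊔ (a ⊓ y) := by
  have h1 : a ⊓ ((a ⊔ x) ⊓ (a ⊔ y) ⊓ (x ⊔ y)) = a ⊓ (x ⊔ y) := by
    apply le_antisymm (inf_le_inf_left _ inf_le_right)
    exact le_inf inf_le_left (le_inf
      (le_inf (inf_le_left.trans le_sup_left) (inf_le_left.trans le_sup_left)) inf_le_right)
  calc a ⊓ (x ⊔ y) = a ⊓ ((a ⊔ x) ⊓ (a ⊔ y) ⊓ (x ⊔ y)) := h1.symm
    _ = a ⊓ ((a ⊓ x) ⊔ ((a ⊓ y) ⊔ (x ⊓ y))) := by rw [ha x y, sup_assoc]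
    _ = (a ⊓ x) ⊔ (a ⊓ ((a ⊓ y) ⊔ (x ⊓ y))) := ha.inf_sup_aux x _
    _ = (a ⊓ x) ⊔ ((a ⊓ y) ⊔ (a ⊓ (x ⊓ y))) := by rw [ha.inf_sup_aux y (x ⊓ y)]
    _ = (a ⊓ x) ⊔ (a ⊓ y) := by
        rw [show (a ⊓ y) ⊔ (a ⊓ (x ⊓ y)) = a ⊓ y from
          sup_eq_left.mpr (inf_le_inf_left a inf_le_right)]
end aux

section comp
variable {L : Type*} [Lattice L] [BoundedOrder L] {a b : L}

/-- decomposition: z = (a⊓z) ⊔ (b⊓z) -/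
theorem decomp (ha : IsNeutral a) (hb1 : a ⊓ b = ⊥) (hb2 : a ⊔ b = ⊤) (z : L) :
    (a ⊓ z) ⊔ (b ⊓ z) = z := by
  have h := ha z b
  rw [hb2, inf_top_eq, hb1] at h
  rw [sup_bot_eq] at h
  apply le_antisymm
  · exact sup_le inf_le_right inf_le_right
  · calc z ≤ (a ⊔ z) ⊓ (z ⊔ b) := le_inf le_sup_right le_sup_left
      _ = (a ⊓ z) ⊔ (z ⊓ b) := h
      _ ≤ (a ⊓ z) ⊔ (b ⊓ z) := by rw [inf_comm z b]

/-- for u ≤ a, v ≤ b : (u ⊔ v) ⊓ b = v -/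
theorem inf_b_of_le (ha : IsNeutral a) (hb1 : a ⊓ b = ⊥) {u v : L}
    (hu : u ≤ a) (hv : v ≤ b) : (u ⊔ v) ⊓ b = v := by
  set t := (u ⊔ v) ⊓ b with ht
  have hvt : v ≤ t := le_inf le_sup_right hv
  have hta : a ⊓ t = ⊥ := le_bot_iff.mp (by rw [← hb1]; exact inf_le_inf_left a inf_le_right)
  have hav : a ⊓ v = ⊥ := le_bot_iff.mp (by rw [← hb1]; exact inf_le_inf_left a hv)
  have h := ha t v
  rw [hta, hav, bot_sup_eq, bot_sup_eq, sup_eq_left.mpr hvt, inf_eq_right.mpr hvt] at h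
  rw [show (a ⊔ t) ⊓ (a ⊔ v) ⊓ t = t ⊓ (a ⊔ v) by
    rw [inf_right_comm, inf_eq_right.mpr (le_sup_right : t ≤ a ⊔ t)]] at h
  have htav : t ≤ a ⊔ v :=
    inf_le_left.trans (sup_le (hu.trans le_sup_left) le_sup_right)
  rw [← h]
  exact (inf_eq_left.mpr htav).symm

theorem inf_b_sup_distrib (ha : IsNeutral a) (hb1 : a ⊓ b = ⊥) (hb2 : a ⊔ b = ⊤) (z w : L) :
    (z ⊔ w) ⊓ b = (b ⊓ z) ⊔ (b ⊓ w) := by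
  have hz := decomp ha hb1 hb2 z
  have hw := decomp ha hb1 hb2 w
  have : z ⊔ w = ((a ⊓ z) ⊔ (a ⊓ w)) ⊔ ((b ⊓ z) ⊔ (b ⊓ w)) := by
    rw [sup_sup_sup_comm, hz, hw]
  rw [this, inf_b_of_le ha hb1 (sup_le inf_le_left inf_le_left)
    (sup_le inf_le_left inf_le_left)]
end comp

/-- For a central element `a` of a bounded lattice `L`, the center of the interval
`[0, a]` equals `Cen L ∩ [0, a]`. -/
theorem center_Icc_eq {L : Type*} [Lattice L] [BoundedOrder L] (a : L)
    (ha : IsCentral a) :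
    haveI : Fact ((⊥ : L) ≤ a) := ⟨bot_le⟩
    ∀ x : Set.Icc (⊥ : L) a, IsCentral x ↔ IsCentral (x : L) := by
  haveI : Fact ((⊥ : L) ≤ a) := ⟨bot_le⟩
  obtain ⟨hna, b, hb1, hb2⟩ := ha
  intro x
  have hxa : (x : L) ≤ a := x.2.2
  have hxa' : (x : L) ⊓ a = x := inf_eq_left.mpr hxa
  have hxb : (x : L) ⊓ b = ⊥ :=
    le_bot_iff.mp ((inf_le_inf_right b hxa).trans hb1.le)
  have hA : ∀ z w : L, (z ⊔ w) ⊓ a = (z ⊓ a) ⊔ (w ⊓ a) := fun z w => by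
    rw [inf_comm _ a, hna.inf_sup_distrib, inf_comm a z, inf_comm a w]
  have hB : ∀ z w : L, (z ⊔ w) ⊓ b = (z ⊓ b) ⊔ (w ⊓ b) := fun z w => by
    rw [inf_b_sup_distrib hna hb1 hb2, inf_comm b z, inf_comm b w]
  have eq_of : ∀ s t : L, s ⊓ a = t ⊓ a → s ⊓ b = t ⊓ b → s = t := fun s t h1 h2 => by
    calc s = (a ⊓ s) ⊔ (b ⊓ s) := (decomp hna hb1 hb2 s).symm
      _ = (a ⊓ t) ⊔ (b ⊓ t) := by
          rw [inf_comm a s, h1, inf_comm b s, h2, inf_comm t a, inf_comm t b]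
      _ = t := decomp hna hb1 hb2 t
  have inf3 : ∀ p q r c : L, (p ⊓ q ⊓ r) ⊓ c = ((p ⊓ c) ⊓ (q ⊓ c)) ⊓ (r ⊓ c) :=
    fun p q r c => by rw [inf_inf_distrib_right (p ⊓ q) r c, inf_inf_distrib_right p q c]
  constructor
  · -- central in Icc → central in L
    rintro ⟨hnx, y, hy1, hy2⟩
    have hy1' : (x : L) ⊓ y = ⊥ := congrArg Subtype.val hy1
    have hy2' : (x : L) ⊔ y = a := congrArg Subtype.val hy2
    have hya : (y : L) ≤ a := y.2.2
    constructor
    · -- neutrality in L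
      intro u v
      apply eq_of
      · -- meet with a
        rw [inf3, hA, hA, hA, hA, hA, hxa', inf_assoc (x : L) u a, inf_assoc (x : L) v a,
          inf_inf_distrib_right u v a]
        exact Subtype.ext_iff.mp
          (hnx ⟨u ⊓ a, ⟨bot_le, inf_le_right⟩⟩ ⟨v ⊓ a, ⟨bot_le, inf_le_right⟩⟩)
      · -- meet with b
        rw [inf3, hB, hB, hB, hB, hB, hxb, bot_sup_eq, bot_sup_eq,
          show (x : L) ⊓ u ⊓ b = ⊥ from
            le_bot_iff.mp ((inf_le_inf_right b inf_le_left).trans hxb.le),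
          show (x : L) ⊓ v ⊓ b = ⊥ from
            le_bot_iff.mp ((inf_le_inf_right b inf_le_left).trans hxb.le),
          bot_sup_eq, bot_sup_eq, inf_inf_distrib_right u v b]
        exact inf_eq_left.mpr (inf_le_left.trans le_sup_left)
    · -- complemented in L by ↑y ⊔ b
      refine ⟨(y : L) ⊔ b, ?_, ?_⟩
      · have key : a ⊓ ((y : L) ⊔ b) = y := by
          have h := hna (y : L) b
          rw [sup_eq_left.mpr hya, hb2, inf_top_eq, hb1, inf_eq_right.mpr hya,
            sup_bot_eq, sup_inf_self] at h
          exact h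
        calc (x : L) ⊓ ((y : L) ⊔ b) = (x : L) ⊓ (a ⊓ ((y : L) ⊔ b)) := by
              rw [← inf_assoc, hxa']
          _ = (x : L) ⊓ y := by rw [key]
          _ = ⊥ := hy1'
      · rw [← sup_assoc, hy2', hb2]
  · -- central in L → central in Icc
    rintro ⟨hnx, y, hy1, hy2⟩
    constructor
    · intro u v
      exact Subtype.ext (hnx (u : L) (v : L))
    · refine ⟨⟨y ⊓ a, ⟨bot_le, inf_le_right⟩⟩, ?_, ?_⟩
      · apply Subtype.ext
        show (x : L) ⊓ (y ⊓ a) = ⊥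
        exact le_bot_iff.mp ((inf_le_inf_left _ inf_le_left).trans hy1.le)
      · apply Subtype.ext
        show (x : L) ⊔ (y ⊓ a) = a
        have h := hnx y a
        rw [hy2, sup_eq_right.mpr hxa, top_inf_eq, sup_comm y a, inf_sup_self,
          hy1, inf_eq_left.mpr hxa, bot_sup_eq] at h
        exact h.symm
end

section
/- Let L be a bounded lattice and let a be a central element of L that is an atom of the center Cen(L). Then the interval [0,a] is directly indecomposable (i.e., it is not isomorphic to a direct product of two lattices each having more than one element). -/
universe u

section NeutralLemmas

variable {L : Type*} [Lattice L] {a : L}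

lemma IsNeutral.dual (hn : IsNeutral a) : IsNeutral (OrderDual.toDual a) :=
  fun x y => (hn (OrderDual.ofDual x) (OrderDual.ofDual y)).symm

variable (hn : IsNeutral a)
include hn

lemma neutral_A (x y : L) : a ⊓ (x ⊔ a ⊓ y) = a ⊓ x ⊔ a ⊓ y := by
  have h := hn x (a ⊓ y)
  have h1 : a ⊔ a ⊓ y = a := sup_inf_self
  have h2 : a ⊓ (a ⊓ y) = a ⊓ y := by rw [← inf_assoc, inf_idem]
  rw [h1, h2] at h
  have h3 : x ⊓ (a ⊓ y) ≤ a ⊓ x := le_inf (inf_le_right.trans inf_le_left) inf_le_left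
  rw [sup_assoc, sup_comm (a ⊓ y), ← sup_assoc, sup_eq_left.2 h3] at h
  calc a ⊓ (x ⊔ a ⊓ y) = (a ⊔ x) ⊓ a ⊓ (x ⊔ a ⊓ y) := by
        rw [inf_eq_right.2 (le_sup_left : a ≤ a ⊔ x)]
    _ = a ⊓ x ⊔ a ⊓ y := h

lemma neutral_inf_sup (x y : L) : a ⊓ (x ⊔ y) = a ⊓ x ⊔ a ⊓ y := by
  refine le_antisymm ?_ (sup_le (inf_le_inf_left _ le_sup_left) (inf_le_inf_left _ le_sup_right))
  have h := hn x y
  have h0 : a ⊓ (x ⊔ y) ≤ (a ⊔ x) ⊓ (a ⊔ y) ⊓ (x ⊔ y) :=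
    le_inf (le_inf (inf_le_left.trans le_sup_left) (inf_le_left.trans le_sup_left)) inf_le_right
  rw [h] at h0
  have h1 : a ⊓ (x ⊔ y) ≤ a ⊓ (x ⊓ y ⊔ a ⊓ x ⊔ a ⊓ y) := by
    refine le_inf inf_le_left (h0.trans ?_)
    rw [sup_comm (a ⊓ x ⊔ a ⊓ y) (x ⊓ y), ← sup_assoc]
  have h2 : a ⊓ (x ⊓ y ⊔ a ⊓ x ⊔ a ⊓ y) = a ⊓ x ⊔ a ⊓ y := by
    rw [neutral_A hn, neutral_A hn]
    have : a ⊓ (x ⊓ y) ≤ a ⊓ x := inf_le_inf_left _ inf_le_left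
    rw [sup_eq_right.2 this]
  exact h1.trans_eq h2

lemma neutral_sup_inf (x y : L) : a ⊔ x ⊓ y = (a ⊔ x) ⊓ (a ⊔ y) :=
  (neutral_inf_sup hn.dual (OrderDual.toDual x) (OrderDual.toDual y) : _)

lemma neutral_inf_sup' (x y : L) : x ⊓ (a ⊔ y) = x ⊓ a ⊔ x ⊓ y := by
  have h := hn x (x ⊓ y)
  have e1 : x ⊔ x ⊓ y = x := sup_inf_self
  have e2 : a ⊔ x ⊓ y = (a ⊔ x) ⊓ (a ⊔ y) := neutral_sup_inf hn x y
  have e3 : x ⊓ (x ⊓ y) = x ⊓ y := by rw [← inf_assoc, inf_idem]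
  rw [e1, e2, e3] at h
  rw [sup_assoc, sup_eq_right.2 (inf_le_right : a ⊓ (x ⊓ y) ≤ x ⊓ y)] at h
  calc x ⊓ (a ⊔ y) = (a ⊔ x) ⊓ ((a ⊔ x) ⊓ (a ⊔ y)) ⊓ x := by
        rw [← inf_assoc, inf_idem, inf_comm (a ⊔ x) (a ⊔ y), inf_assoc,
          inf_eq_right.2 (le_sup_right : x ≤ a ⊔ x), inf_comm]
    _ = a ⊓ x ⊔ x ⊓ y := h
    _ = x ⊓ a ⊔ x ⊓ y := by rw [inf_comm a x]

lemma neutral_inj {x y : L} (h1 : x ⊓ a = y ⊓ a) (h2 : x ⊔ a = y ⊔ a) : x = y := by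
  have key : ∀ u v : L, u ⊓ a = v ⊓ a → u ⊔ a = v ⊔ a → u ≤ v := by
    intro u v e1 e2
    calc u = u ⊓ (a ⊔ v) := (inf_eq_left.2 (le_sup_left.trans_eq (e2.trans (sup_comm v a)))).symm
      _ = u ⊓ a ⊔ u ⊓ v := neutral_inf_sup' hn u v
      _ ≤ v := by rw [e1]; exact sup_le inf_le_left inf_le_right
  exact le_antisymm (key x y h1 h2) (key y x h1.symm h2.symm)

end NeutralLemmas

lemma isNeutral_top {L : Type*} [Lattice L] [OrderTop L] : IsNeutral (⊤ : L) := by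
  intro x y
  simp only [top_sup_eq, top_inf_eq, sup_assoc]
  rw [inf_comm x y, sup_inf_self]

lemma isNeutral_bot {L : Type*} [Lattice L] [OrderBot L] : IsNeutral (⊥ : L) := by
  intro x y
  simp only [bot_sup_eq, bot_inf_eq, inf_assoc]
  rw [sup_comm x y, inf_sup_self]

lemma isNeutral_prod {A B : Type*} [Lattice A] [Lattice B] {p : A × B}
    (h1 : IsNeutral p.1) (h2 : IsNeutral p.2) : IsNeutral p :=
  fun x y => Prod.ext (h1 x.1 y.1) (h2 x.2 y.2)

lemma isNeutral_map {M N : Type*} [Lattice M] [Lattice N] (φ : M ≃o N) {e : M}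
    (h : IsNeutral e) : IsNeutral (φ e) := by
  intro x y
  simpa only [map_inf, map_sup, φ.apply_symm_apply] using
    congrArg φ (h (φ.symm x) (φ.symm y))

lemma subsingleton_of_top_eq_bot' {X : Type*} [Lattice X] [BoundedOrder X]
    (h : (⊤ : X) = ⊥) : Subsingleton X :=
  ⟨fun x y => le_antisymm ((le_top.trans h.le).trans bot_le)
    ((le_top.trans h.le).trans bot_le)⟩

/-- If `a` is a central element of a bounded lattice `L` that is an atom of the
center `Cen L`, then the interval `[0, a]` is directly indecomposable. -/
theorem Icc_directlyIndecomposable {L : Type u} [Lattice L] [BoundedOrder L] (a : L)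
    (ha : IsCenterAtom a) :
    haveI : Fact ((⊥ : L) ≤ a) := ⟨bot_le⟩
    DirectlyIndecomposable (Set.Icc (⊥ : L) a) := by
  haveI : Fact ((⊥ : L) ≤ a) := ⟨bot_le⟩
  intro A B hAB
  obtain ⟨φ⟩ := hAB
  obtain ⟨⟨hna, b, hab, hab'⟩, -, hmin⟩ := ha
  set c' : Set.Icc (⊥ : L) a := φ.symm (⊤, ⊥) with hc'
  set d' : Set.Icc (⊥ : L) a := φ.symm (⊥, ⊤) with hd'
  have hmeet : ((⊤, ⊥) : ↥A × ↥B) ⊓ (⊥, ⊤) = ⊥ := by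
    refine Prod.ext ?_ ?_ <;> · show _ ⊓ _ = _; simp
  have hjoin : ((⊤, ⊥) : ↥A × ↥B) ⊔ (⊥, ⊤) = ⊤ := by
    refine Prod.ext ?_ ?_ <;> · show _ ⊔ _ = _; simp
  have hcd_inf' : c' ⊓ d' = ⊥ := by rw [hc', hd', ← map_inf, hmeet, map_bot]
  have hcd_sup' : c' ⊔ d' = ⊤ := by rw [hc', hd', ← map_sup, hjoin, map_top]
  have hnc' : IsNeutral c' := by
    rw [hc']
    exact isNeutral_map φ.symm (isNeutral_prod isNeutral_top isNeutral_bot)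
  have hcd : (c' : L) ⊓ (d' : L) = ⊥ := congrArg Subtype.val hcd_inf'
  have hcds : (c' : L) ⊔ (d' : L) = a := congrArg Subtype.val hcd_sup'
  have hca : (c' : L) ≤ a := c'.2.2
  have hda : (d' : L) ≤ a := d'.2.2
  set c : L := (c' : L) with hc
  set d : L := (d' : L) with hd
  -- auxiliary distributivity facts
  have e1 : ∀ x : L, (c ⊔ x) ⊓ a = c ⊔ a ⊓ x := by
    intro x
    rw [inf_comm, neutral_inf_sup hna, inf_eq_right.2 hca]
  have ac1 : ∀ t : L, a ⊓ (c ⊓ t) = c ⊓ (a ⊓ t) := by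
    intro t
    rw [← inf_assoc, inf_comm a c, inf_assoc]
  -- c is neutral in L
  have hnc : IsNeutral c := by
    intro x y
    apply neutral_inj hna
    · -- meet both sides with a
      have hm := congrArg Subtype.val
        (hnc' ⟨a ⊓ x, bot_le, inf_le_left⟩ ⟨a ⊓ y, bot_le, inf_le_left⟩)
      calc (c ⊔ x) ⊓ (c ⊔ y) ⊓ (x ⊔ y) ⊓ a
          = ((c ⊔ x) ⊓ a) ⊓ ((c ⊔ y) ⊓ a) ⊓ ((x ⊔ y) ⊓ a) := by
            rw [inf_inf_distrib_right ((c ⊔ x) ⊓ (c ⊔ y)), inf_inf_distrib_right (c ⊔ x)]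
        _ = (c ⊔ a ⊓ x) ⊓ (c ⊔ a ⊓ y) ⊓ (a ⊓ x ⊔ a ⊓ y) := by
            rw [e1, e1, inf_comm (x ⊔ y) a, neutral_inf_sup hna]
        _ = c ⊓ (a ⊓ x) ⊔ c ⊓ (a ⊓ y) ⊔ a ⊓ x ⊓ (a ⊓ y) := hm
        _ = (c ⊓ x ⊔ c ⊓ y ⊔ x ⊓ y) ⊓ a := by
            rw [inf_comm _ a, neutral_inf_sup hna, neutral_inf_sup hna,
              ac1 x, ac1 y, inf_inf_distrib_left a x y]
    · -- join both sides with a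
      have hL : (c ⊔ x) ⊓ (c ⊔ y) ⊓ (x ⊔ y) ⊔ a = (a ⊔ x) ⊓ (a ⊔ y) := by
        rw [sup_comm _ a, neutral_sup_inf hna, neutral_sup_inf hna,
          ← sup_assoc a c x, ← sup_assoc a c y, sup_eq_left.2 hca]
        exact inf_eq_left.2 (inf_le_left.trans (sup_le_sup_left le_sup_left a))
      have hR : c ⊓ x ⊔ c ⊓ y ⊔ x ⊓ y ⊔ a = (a ⊔ x) ⊓ (a ⊔ y) := by
        rw [sup_comm _ a, ← sup_assoc a, ← sup_assoc a,
          sup_eq_left.2 (inf_le_left.trans hca : c ⊓ x ≤ a),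
          sup_eq_left.2 (inf_le_left.trans hca : c ⊓ y ≤ a), neutral_sup_inf hna]
      rw [hL, hR]
  -- c is complemented in L
  have hcomp1 : c ⊓ (d ⊔ b) = ⊥ := by
    have h1 : a ⊓ (d ⊔ b) = d := by
      rw [neutral_inf_sup hna, hab, sup_bot_eq, inf_eq_right.2 hda]
    calc c ⊓ (d ⊔ b) = c ⊓ (a ⊓ (d ⊔ b)) := by
          rw [← inf_assoc, inf_eq_left.2 hca]
      _ = ⊥ := by rw [h1, hcd]
  have hcomp2 : c ⊔ (d ⊔ b) = ⊤ := by rw [← sup_assoc, hcds, hab']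
  have hcc : IsCentral c := ⟨hnc, d ⊔ b, hcomp1, hcomp2⟩
  by_cases hceq : c = a
  · right
    have hdbot : d = ⊥ := le_bot_iff.1 (hcd.le.trans' (le_inf (hda.trans hceq.ge) le_rfl))
    have hd0 : d' = ⊥ := Subtype.ext hdbot
    have h2 : ((⊥, ⊤) : ↥A × ↥B) = ⊥ := by
      apply φ.symm.injective
      rw [← hd', map_bot]
      exact hd0
    exact subsingleton_of_top_eq_bot' (congrArg Prod.snd h2)
  · left
    have hcbot : c = ⊥ := hmin c hcc (lt_of_le_of_ne hca hceq)
    have hc0 : c' = ⊥ := Subtype.ext hcbot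
    have h2 : ((⊤, ⊥) : ↥A × ↥B) = ⊥ := by
      apply φ.symm.injective
      rw [← hc', map_bot]
      exact hc0
    exact subsingleton_of_top_eq_bot' (congrArg Prod.fst h2)
end

section
/- Let L be a complete lattice. Then L is totally decomposable (isomorphic to a direct product of directly indecomposable lattices) if and only if: Cen(L) is a complete sublattice of L, Cen(L) is atomistic, and for every x in L, x equals the join over all atoms u of Cen(L) of x ∧ u. -/
universe u

section Neutral

variable {M : Type*} [Lattice M] {u : M}

lemma IsNeutral.dual_s2 (h : IsNeutral u) : IsNeutral (OrderDual.toDual u) :=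
  fun x y => (h (OrderDual.ofDual x) (OrderDual.ofDual y)).symm

lemma IsNeutral.inf_sup (h : IsNeutral u) (a b : M) :
    u ⊓ (a ⊔ b) = u ⊓ a ⊔ u ⊓ b := by
  refine le_antisymm ?_
    (sup_le (inf_le_inf_left _ le_sup_left) (inf_le_inf_left _ le_sup_right))
  set c := u ⊓ a ⊔ u ⊓ b with hc
  have h1 : u ⊓ (a ⊔ b) ≤ c ⊔ a ⊓ b := by
    have : u ⊓ (a ⊔ b) ≤ (u ⊔ a) ⊓ (u ⊔ b) ⊓ (a ⊔ b) :=
      le_inf (le_inf (inf_le_left.trans le_sup_left)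
        (inf_le_left.trans le_sup_left)) inf_le_right
    calc u ⊓ (a ⊔ b) ≤ (u ⊓ a) ⊔ (u ⊓ b) ⊔ (a ⊓ b) := (h a b) ▸ this
      _ = c ⊔ a ⊓ b := rfl
  calc u ⊓ (a ⊔ b) ≤ u ⊓ (c ⊔ a ⊓ b) := le_inf inf_le_left h1
    _ ≤ (u ⊔ c) ⊓ (u ⊔ a ⊓ b) ⊓ (c ⊔ a ⊓ b) :=
      le_inf (le_inf (inf_le_left.trans le_sup_left)
        (inf_le_left.trans le_sup_left)) inf_le_right
    _ = (u ⊓ c) ⊔ (u ⊓ (a ⊓ b)) ⊔ (c ⊓ (a ⊓ b)) := h c (a ⊓ b)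
    _ ≤ c := sup_le (sup_le inf_le_right
        (le_trans (inf_le_inf_left u inf_le_left) le_sup_left)) inf_le_left

lemma IsNeutral.sup_inf (h : IsNeutral u) (a b : M) :
    u ⊔ a ⊓ b = (u ⊔ a) ⊓ (u ⊔ b) :=
  h.dual_s2.inf_sup (OrderDual.toDual a) (OrderDual.toDual b)

lemma IsNeutral.cancel {x y : M} (h : IsNeutral u) (h1 : x ⊓ u = y ⊓ u)
    (h2 : x ⊔ u = y ⊔ u) : x = y := by
  have key := h x y
  have e1 : u ⊔ y = u ⊔ x := by rw [sup_comm u y, ← h2, sup_comm]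
  have e2 : u ⊓ y = u ⊓ x := by rw [inf_comm u y, ← h1, inf_comm]
  rw [e1, e2, inf_idem, sup_idem] at key
  have key2 : (u ⊔ x) ⊓ (x ⊔ y) = u ⊓ x ⊔ x ⊓ y := key
  have hx : x = u ⊓ x ⊔ x ⊓ y := by
    refine le_antisymm ?_ (sup_le inf_le_right inf_le_left)
    calc x ≤ (u ⊔ x) ⊓ (x ⊔ y) := le_inf le_sup_right le_sup_left
      _ = _ := key2
  have hy : y = u ⊓ x ⊔ x ⊓ y := by
    refine le_antisymm ?_ (sup_le (e2 ▸ inf_le_right) inf_le_right)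
    calc y ≤ (u ⊔ x) ⊓ (x ⊔ y) := le_inf (e1 ▸ le_sup_right) le_sup_right
      _ = _ := key2
  rw [hx, ← hy]

lemma IsNeutral.decomp [BoundedOrder M] {w : M} (h : IsNeutral u)
    (h1 : u ⊓ w = ⊥) (h2 : u ⊔ w = ⊤) (x : M) : x = x ⊓ u ⊔ x ⊓ w := by
  have key := h x w
  rw [h1, h2] at key
  -- key : (u ⊔ x) ⊓ ⊤ ⊓ (x ⊔ w) = u ⊓ x ⊔ ⊥ ⊔ x ⊓ w
  simp only [inf_top_eq, sup_bot_eq, bot_sup_eq] at key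
  rw [inf_comm x u]
  refine le_antisymm ?_ (sup_le inf_le_right inf_le_left)
  calc x ≤ (u ⊔ x) ⊓ (x ⊔ w) := le_inf le_sup_right le_sup_left
    _ = u ⊓ x ⊔ x ⊓ w := key

end Neutral

section More

variable {M : Type*} [Lattice M]

lemma inf_le_sup' {x y : M} : x ⊓ y ≤ x ⊔ y := inf_le_left.trans le_sup_left

lemma isNeutral_bot_s2 [OrderBot M] : IsNeutral (⊥ : M) := by
  intro x y
  simp only [bot_sup_eq, bot_inf_eq, bot_sup_eq]
  exact inf_eq_left.2 inf_le_sup'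

lemma isNeutral_top_s2 [OrderTop M] : IsNeutral (⊤ : M) := by
  intro x y
  simp only [top_sup_eq, top_inf_eq, inf_top_eq]
  exact (sup_eq_left.2 inf_le_sup').symm

lemma isCentral_bot [BoundedOrder M] : IsCentral (⊥ : M) :=
  ⟨isNeutral_bot_s2, ⊤, by simp, by simp⟩

lemma isCentral_top [BoundedOrder M] : IsCentral (⊤ : M) :=
  ⟨isNeutral_top_s2, ⊥, by simp, by simp⟩

variable {N : Type*} [Lattice N]

lemma OrderIso.isNeutral (f : M ≃o N) {a : M} (h : IsNeutral a) :
    IsNeutral (f a) := by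
  intro x y
  have := congrArg f (h (f.symm x) (f.symm y))
  simpa only [map_inf, map_sup, f.apply_symm_apply] using this

lemma OrderIso.isCentral [BoundedOrder M] [BoundedOrder N] (f : M ≃o N) {a : M}
    (h : IsCentral a) : IsCentral (f a) := by
  obtain ⟨hn, b, hb1, hb2⟩ := h
  refine ⟨f.isNeutral hn, f b, ?_, ?_⟩
  · rw [← map_inf, hb1, f.map_bot]
  · rw [← map_sup, hb2, f.map_top]

lemma OrderIso.isCentral_iff [BoundedOrder M] [BoundedOrder N] (f : M ≃o N) {a : M} :
    IsCentral (f a) ↔ IsCentral a :=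
  ⟨fun h => by simpa using f.symm.isCentral h, f.isCentral⟩

lemma OrderIso.isCenterAtom [BoundedOrder M] [BoundedOrder N] (f : M ≃o N) {a : M}
    (h : IsCenterAtom a) : IsCenterAtom (f a) := by
  obtain ⟨hc, hne, hmin⟩ := h
  refine ⟨f.isCentral hc, ?_, ?_⟩
  · intro hb
    exact hne (by simpa using congrArg f.symm (hb.trans f.map_bot.symm))
  · intro b hb hlt
    have : f.symm b = ⊥ := hmin _ (by simpa using f.symm.isCentral hb)
      (by simpa using f.symm.strictMono hlt)
    simpa using congrArg f this

end More

section InfDistrib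

variable {L : Type u} [CompleteLattice L]

lemma IsCentral.inf_iSup {u : L} (hu : IsCentral u) {ι : Sort*} (g : ι → L) :
    u ⊓ ⨆ i, g i = ⨆ i, u ⊓ g i := by
  obtain ⟨hn, w, hw1, hw2⟩ := hu
  refine le_antisymm ?_ (by simp only [le_inf_iff]; exact
    ⟨iSup_le fun i => inf_le_left, iSup_mono fun i => inf_le_right⟩)
  set t := ⨆ i, u ⊓ g i with ht
  have hz : (⨆ i, g i) ≤ t ⊔ (w ⊓ ⨆ i, g i) := by
    refine iSup_le fun i => ?_
    calc g i = g i ⊓ u ⊔ g i ⊓ w := hn.decomp hw1 hw2 (g i)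
      _ ≤ t ⊔ (w ⊓ ⨆ i, g i) := by
        refine sup_le_sup ?_ ?_
        · rw [inf_comm]; exact le_iSup (fun i => u ⊓ g i) i
        · rw [inf_comm]; exact inf_le_inf le_rfl (le_iSup g i)
  calc u ⊓ ⨆ i, g i ≤ u ⊓ (t ⊔ (w ⊓ ⨆ i, g i)) := inf_le_inf le_rfl hz
    _ = u ⊓ t ⊔ u ⊓ (w ⊓ ⨆ i, g i) := hn.inf_sup _ _
    _ ≤ t ⊔ ⊥ := by
        refine sup_le_sup inf_le_right ?_
        rw [← inf_assoc, hw1]; exact inf_le_left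
    _ = t := sup_bot_eq t

end InfDistrib

section Prod

variable {A B : Type*} [Lattice A] [Lattice B] [BoundedOrder A] [BoundedOrder B]

lemma isCentral_prod {a : A} {b : B} (ha : IsCentral a) (hb : IsCentral b) :
    IsCentral ((a, b) : A × B) := by
  obtain ⟨hna, a', ha1, ha2⟩ := ha
  obtain ⟨hnb, b', hb1, hb2⟩ := hb
  refine ⟨fun x y => ?_, (a', b'), ?_, ?_⟩
  · exact Prod.ext (hna x.1 y.1) (hnb x.2 y.2)
  · exact Prod.ext ha1 hb1
  · exact Prod.ext ha2 hb2

end Prod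

section Pi

variable {ι : Type*} {G : ι → Type*} [∀ i, Lattice (G i)] [∀ i, BoundedOrder (G i)]

lemma isCentral_pi_iff {c : ∀ i, G i} : IsCentral c ↔ ∀ i, IsCentral (c i) := by
  classical
  constructor
  · rintro ⟨hn, b, hb1, hb2⟩ i
    refine ⟨fun x y => ?_, b i, congrFun hb1 i, congrFun hb2 i⟩
    have := congrFun (hn (Function.update ⊥ i x) (Function.update ⊥ i y)) i
    simpa [Function.update_self] using this
  · intro h
    refine ⟨fun x y => funext fun i => (h i).1 (x i) (y i),
      fun i => (h i).2.choose, funext fun i => (h i).2.choose_spec.1,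
      funext fun i => (h i).2.choose_spec.2⟩

end Pi

section Decomp

variable {M : Type*} [Lattice M] [BoundedOrder M]

/-- decomposition of a bounded lattice along a central element -/
noncomputable def centralDecomp {z w : M} (hz : IsNeutral z)
    (h1 : z ⊓ w = ⊥) (h2 : z ⊔ w = ⊤) :
    M ≃o Set.Iic z × Set.Iic w := by
  have hw1 : w ⊓ z = ⊥ := by rw [inf_comm]; exact h1
  refine Equiv.toOrderIso
    ⟨fun x => (⟨x ⊓ z, inf_le_right⟩, ⟨x ⊓ w, inf_le_right⟩),
     fun p => (p.1 : M) ⊔ (p.2 : M), ?_, ?_⟩ ?_ ?_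
  · intro x
    exact (hz.decomp h1 h2 x).symm
  · rintro ⟨⟨a, ha⟩, ⟨b, hb⟩⟩
    have hbz : b ⊓ z = ⊥ := le_bot_iff.1 (hw1 ▸ inf_le_inf hb le_rfl)
    have haw : a ⊓ w = ⊥ := le_bot_iff.1 (h1 ▸ inf_le_inf ha le_rfl)
    have e1 : (a ⊔ b) ⊓ z = a := by
      rw [inf_comm, hz.inf_sup, inf_comm z a, inf_comm z b,
        inf_eq_left.2 ha, hbz, sup_bot_eq]
    have e2 : (a ⊔ b) ⊓ w = b := by
      refine hz.cancel ?_ ?_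
      · have hx : (a ⊔ b) ⊓ w ⊓ z = ⊥ :=
          le_bot_iff.1 (hw1 ▸ inf_le_inf (inf_le_right) le_rfl)
        have hy : b ⊓ z = ⊥ := le_bot_iff.1 (hw1 ▸ inf_le_inf hb le_rfl)
        rw [hx, hy]
      · have : z ⊔ (a ⊔ b) ⊓ w = z ⊔ (a ⊔ b) := by
          rw [hz.sup_inf, h2, inf_top_eq]
        have hza : z ⊔ (a ⊔ b) = z ⊔ b := by
          rw [← sup_assoc, sup_eq_left.2 ha]
        rw [sup_comm _ z, this, hza, sup_comm]
    exact Prod.ext (Subtype.ext e1) (Subtype.ext e2)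
  · intro x y hxy
    exact ⟨Subtype.mk_le_mk.2 (inf_le_inf hxy le_rfl),
      Subtype.mk_le_mk.2 (inf_le_inf hxy le_rfl)⟩
  · rintro ⟨⟨a, _⟩, ⟨b, _⟩⟩ ⟨⟨a', _⟩, ⟨b', _⟩⟩ ⟨hh1, hh2⟩
    exact sup_le_sup hh1 hh2

end Decomp



lemma DirectlyIndecomposable.central_eq {M : Type u} [Lattice M] [BoundedOrder M]
    (h : DirectlyIndecomposable M) {a : M} (ha : IsCentral a) : a = ⊥ ∨ a = ⊤ := by
  obtain ⟨hn, w, h1, h2⟩ := ha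
  rcases h (BddLat.of (Set.Iic a)) (BddLat.of (Set.Iic w)) ⟨centralDecomp hn h1 h2⟩ with hA | hB
  · left
    exact congrArg Subtype.val (@Subsingleton.elim _ hA (⟨a, le_rfl⟩ : Set.Iic a) ⟨⊥, bot_le⟩)
  · right
    have hwbot : w = ⊥ :=
      congrArg Subtype.val (@Subsingleton.elim _ hB (⟨w, le_rfl⟩ : Set.Iic w) ⟨⊥, bot_le⟩)
    rw [← h2, hwbot, sup_bot_eq]


/-- A complete lattice is totally decomposable iff its center is a complete
atomistic sublattice and every element is the join of its meets with the
atoms of the center. -/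
theorem totallyDecomposable_iff {L : Type u} [CompleteLattice L] :
    TotallyDecomposable L ↔
      ((∀ S : Set L, (∀ a ∈ S, IsCentral a) → IsCentral (sSup S) ∧ IsCentral (sInf S)) ∧
        (∀ a : L, IsCentral a → a = sSup {u : L | IsCenterAtom u ∧ u ≤ a}) ∧
        (∀ x : L, x = ⨆ u : {u : L // IsCenterAtom u}, x ⊓ (u : L))) := by
  classical
  constructor
  · rintro ⟨ι, F, hind, ⟨f⟩⟩
    -- central elements of each factor are trivial
    have hFcentral : ∀ i (a : ↥(F i)), IsCentral a → a = ⊥ ∨ a = ⊤ :=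
      fun i a ha => (hind i).central_eq ha
    have hcentral_iff : ∀ c : ∀ i, ↥(F i),
        IsCentral c ↔ ∀ i, c i = ⊥ ∨ c i = ⊤ := by
      intro c
      constructor
      · intro hc i
        exact hFcentral i _ (isCentral_pi_iff.1 hc i)
      · intro h
        refine isCentral_pi_iff.2 fun i => ?_
        rcases h i with h' | h'
        · rw [h']; exact isCentral_bot
        · rw [h']; exact isCentral_top
    -- the unit vectors
    set unit : ι → ∀ i, ↥(F i) := fun i => Function.update (⊥ : ∀ i, ↥(F i)) i ⊤ with hunit_def
    have hunit_self : ∀ i, unit i i = ⊤ := fun i => Function.update_self i ⊤ ⊥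
    have hunit_ne : ∀ i j, j ≠ i → unit i j = ⊥ := fun i j hj => Function.update_of_ne hj ⊤ ⊥
    have hunit_central : ∀ i, IsCentral (unit i) := by
      intro i
      refine (hcentral_iff _).2 fun j => ?_
      by_cases hj : j = i
      · subst hj; right; exact hunit_self j
      · left; exact hunit_ne i j hj
    have hatom : ∀ i, (⊥ : ↥(F i)) ≠ ⊤ → IsCenterAtom (f.symm (unit i)) := by
      intro i hbt
      refine ⟨f.symm.isCentral (hunit_central i), ?_, ?_⟩
      · intro h
        have h2 : unit i = ⊥ := by
          rw [← f.apply_symm_apply (unit i), h, f.map_bot]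
        exact hbt (((hunit_self i).symm.trans (congrFun h2 i)).trans rfl).symm
      · intro b hb hlt
        have hlt' : f b < unit i := by
          have := f.strictMono hlt
          rwa [f.apply_symm_apply] at this
        have hb01 := (hcentral_iff (f b)).1 (f.isCentral hb)
        have hbbot : ∀ j, f b j = ⊥ := by
          intro j
          by_cases hj : j = i
          · subst hj
            rcases hb01 j with h' | h'
            · exact h'
            · exfalso
              refine hlt'.ne (funext fun k => ?_)
              by_cases hk : k = j
              · subst hk; rw [h', hunit_self]
              · have := hlt'.le k
                rw [hunit_ne _ _ hk] at this ⊢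
                exact le_bot_iff.1 this
          · have := hlt'.le j
            rw [hunit_ne _ _ hj] at this
            exact le_bot_iff.1 this
        have : f b = f ⊥ := by
          rw [f.map_bot]; exact funext hbbot
        exact f.injective this
    refine ⟨?_, ?_, ?_⟩
    · -- complete sublattice
      intro S hS
      have hS' : ∀ s ∈ S, ∀ i, f s i = ⊥ ∨ f s i = ⊤ :=
        fun s hs => (hcentral_iff _).1 (f.isCentral (hS s hs))
      constructor
      · set g : ∀ i, ↥(F i) := fun i => if ∃ s ∈ S, f s i = ⊤ then ⊤ else ⊥ with hg
        have hub : IsLUB (f '' S) g := by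
          constructor
          · rintro _ ⟨s, hs, rfl⟩ i
            rcases hS' s hs i with h' | h'
            · rw [h']; exact bot_le
            · rw [h']
              show (⊤ : ↥(F i)) ≤ if ∃ s ∈ S, f s i = ⊤ then ⊤ else ⊥
              rw [if_pos ⟨s, hs, h'⟩]
          · intro z hz i
            show (if ∃ s ∈ S, f s i = ⊤ then (⊤ : ↥(F i)) else ⊥) ≤ z i
            by_cases hex : ∃ s ∈ S, f s i = ⊤
            · rw [if_pos hex]
              obtain ⟨s, hs, hsi⟩ := hex
              exact hsi ▸ (hz ⟨s, hs, rfl⟩ i)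
            · rw [if_neg hex]; exact bot_le
        have heq : f (sSup S) = g := (f.isLUB_image'.2 (isLUB_sSup S)).unique hub
        refine f.isCentral_iff.1 ?_
        rw [heq]
        refine (hcentral_iff g).2 fun i => ?_
        by_cases hex : ∃ s ∈ S, f s i = ⊤
        · right; show (if ∃ s ∈ S, f s i = ⊤ then (⊤ : ↥(F i)) else ⊥) = ⊤; rw [if_pos hex]
        · left; show (if ∃ s ∈ S, f s i = ⊤ then (⊤ : ↥(F i)) else ⊥) = ⊥; rw [if_neg hex]
      · set g : ∀ i, ↥(F i) := fun i => if ∃ s ∈ S, f s i = ⊥ then ⊥ else ⊤ with hg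
        have hlb : IsGLB (f '' S) g := by
          constructor
          · rintro _ ⟨s, hs, rfl⟩ i
            show (if ∃ s ∈ S, f s i = ⊥ then (⊥ : ↥(F i)) else ⊤) ≤ f s i
            rcases hS' s hs i with h' | h'
            · rw [if_pos ⟨s, hs, h'⟩]; exact bot_le
            · rw [h']; exact le_top
          · intro z hz i
            show z i ≤ if ∃ s ∈ S, f s i = ⊥ then (⊥ : ↥(F i)) else ⊤
            by_cases hex : ∃ s ∈ S, f s i = ⊥
            · rw [if_pos hex]
              obtain ⟨s, hs, hsi⟩ := hex
              exact hsi ▸ (hz ⟨s, hs, rfl⟩ i)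
            · rw [if_neg hex]; exact le_top
        have heq : f (sInf S) = g := (f.isGLB_image'.2 (isGLB_sInf S)).unique hlb
        refine f.isCentral_iff.1 ?_
        rw [heq]
        refine (hcentral_iff g).2 fun i => ?_
        by_cases hex : ∃ s ∈ S, f s i = ⊥
        · left; show (if ∃ s ∈ S, f s i = ⊥ then (⊥ : ↥(F i)) else ⊤) = ⊥; rw [if_pos hex]
        · right; show (if ∃ s ∈ S, f s i = ⊥ then (⊥ : ↥(F i)) else ⊤) = ⊤; rw [if_neg hex]
    · -- atomistic
      intro a ha
      refine le_antisymm ?_ (sSup_le fun u hu => hu.2)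
      rw [← f.le_iff_le]
      intro i
      rcases (hcentral_iff (f a)).1 (f.isCentral ha) i with h' | h'
      · rw [h']; exact bot_le
      · by_cases hbt : (⊥ : ↥(F i)) = ⊤
        · calc f a i ≤ ⊤ := le_top
            _ = ⊥ := hbt.symm
            _ ≤ _ := bot_le
        · have hat := hatom i hbt
          have hle : f.symm (unit i) ≤ a := by
            rw [← f.le_iff_le, f.apply_symm_apply]
            intro j
            by_cases hj : j = i
            · subst hj; rw [hunit_self, h']
            · rw [hunit_ne _ _ hj]; exact bot_le
          have hmem : f.symm (unit i) ∈ {u : L | IsCenterAtom u ∧ u ≤ a} := ⟨hat, hle⟩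
          have := f.monotone (le_sSup hmem)
          rw [f.apply_symm_apply] at this
          calc f a i = ⊤ := h'
            _ = unit i i := (hunit_self i).symm
            _ ≤ _ := this i
    · -- join of atoms
      intro x
      refine le_antisymm ?_ (iSup_le fun u => inf_le_left)
      rw [← f.le_iff_le]
      intro i
      by_cases hbt : (⊥ : ↥(F i)) = ⊤
      · calc f x i ≤ ⊤ := le_top
          _ = ⊥ := hbt.symm
          _ ≤ _ := bot_le
      · have hat := hatom i hbt
        have hle : x ⊓ f.symm (unit i) ≤ ⨆ u : {u : L // IsCenterAtom u}, x ⊓ (u : L) :=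
          le_iSup (fun u : {u : L // IsCenterAtom u} => x ⊓ (u : L)) ⟨f.symm (unit i), hat⟩
        have h2 := f.monotone hle
        rw [map_inf, f.apply_symm_apply] at h2
        have h3 := h2 i
        calc f x i = f x i ⊓ unit i i := by rw [hunit_self, inf_top_eq]
          _ ≤ _ := h3
  · rintro ⟨hcomp, hatomistic, hjoin⟩
    -- disjointness of distinct center atoms
    have hdisj : ∀ u v : {u : L // IsCenterAtom u}, u ≠ v → u.val ⊓ v.val = ⊥ := by
      intro u v hne
      have hc : IsCentral (u.val ⊓ v.val) := by
        have := (hcomp {u.val, v.val} ?_).2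
        · rwa [sInf_pair] at this
        · rintro a (rfl | rfl)
          exacts [u.2.1, v.2.1]
      rcases lt_or_eq_of_le (inf_le_left : u.val ⊓ v.val ≤ u.val) with hlt | heq
      · exact u.2.2.2 _ hc hlt
      · exfalso
        have huv : u.val ≤ v.val := inf_eq_left.1 heq
        rcases lt_or_eq_of_le huv with hlt' | heq'
        · exact u.2.2.1 (v.2.2.2 _ u.2.1 hlt')
        · exact hne (Subtype.ext heq')
    refine ⟨{u : L // IsCenterAtom u}, fun u => BddLat.of (Set.Iic u.val), ?_, ?_⟩
    · -- each interval is directly indecomposable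
      intro u A B ⟨e⟩
      by_cases hA : (⊥ : ↥A) = ⊤
      · exact Or.inl (subsingleton_of_bot_eq_top hA)
      by_cases hB : (⊥ : ↥B) = ⊤
      · exact Or.inr (subsingleton_of_bot_eq_top hB)
      exfalso
      obtain ⟨hn, w, hw1, hw2⟩ := u.2.1
      set c : Set.Iic u.val := e.symm (⊤, ⊥) with hc_def
      have hcIic : IsCentral c :=
        e.symm.isCentral (isCentral_prod isCentral_top isCentral_bot)
      set fdec := centralDecomp hn hw1 hw2 with hfdec
      have hval : fdec.symm (c, (⊥ : Set.Iic w)) = (c : L) := by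
        show (c : L) ⊔ ((⊥ : Set.Iic w) : L) = (c : L)
        rw [Set.Iic.coe_bot, sup_bot_eq]
      have hcL : IsCentral (c : L) := by
        rw [← hval]
        exact fdec.symm.isCentral (isCentral_prod hcIic isCentral_bot)
      rcases lt_or_eq_of_le (c.2 : (c : L) ≤ u.val) with hlt | heq
      · have hcbot : (c : L) = ⊥ := u.2.2.2 _ hcL hlt
        have : c = (⊥ : Set.Iic u.val) := Subtype.ext (by rw [hcbot, Set.Iic.coe_bot])
        have h2 : ((⊤, ⊥) : ↥A × ↥B) = ⊥ := by
          rw [← e.apply_symm_apply ((⊤, ⊥) : ↥A × ↥B), ← hc_def, this, e.map_bot]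
        exact hA (congrArg Prod.fst h2).symm
      · have : c = (⊤ : Set.Iic u.val) := Subtype.ext (by rw [heq, Set.Iic.coe_top])
        have h2 : ((⊤, ⊥) : ↥A × ↥B) = ⊤ := by
          rw [← e.apply_symm_apply ((⊤, ⊥) : ↥A × ↥B), ← hc_def, this, e.map_top]
        exact hB (congrArg Prod.snd h2)
    · -- the isomorphism
      have main : L ≃o ∀ u : {u : L // IsCenterAtom u}, Set.Iic u.val := by
        refine Equiv.toOrderIso
          ⟨fun x u => (⟨x ⊓ u.val, inf_le_right⟩ : Set.Iic u.val),
           fun y => ⨆ u, ((y u : Set.Iic u.val) : L), ?_, ?_⟩ ?_ ?_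
        · intro x
          exact (hjoin x).symm
        · intro y
          funext u
          refine Subtype.ext ?_
          show (⨆ v, ((y v : Set.Iic v.val) : L)) ⊓ u.val = ((y u : Set.Iic u.val) : L)
          rw [inf_comm, (u.2.1).inf_iSup]
          refine le_antisymm (iSup_le fun v => ?_) ?_
          · by_cases hv : v = u
            · subst hv; exact inf_le_right
            · calc u.val ⊓ ((y v : Set.Iic v.val) : L) ≤ u.val ⊓ v.val :=
                  inf_le_inf le_rfl (y v).2
                _ = ⊥ := hdisj u v (Ne.symm hv)
                _ ≤ _ := bot_le
          · have h1 : u.val ⊓ ((y u : Set.Iic u.val) : L) = ((y u : Set.Iic u.val) : L) :=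
              inf_eq_right.2 (y u).2
            calc ((y u : Set.Iic u.val) : L) = u.val ⊓ _ := h1.symm
              _ ≤ _ := le_iSup (fun v => u.val ⊓ ((y v : Set.Iic v.val) : L)) u
        · intro x x' h u
          exact Subtype.mk_le_mk.2 (inf_le_inf h le_rfl)
        · intro y y' h
          exact iSup_mono fun u => h u
      exact ⟨main⟩
end

section
/- Let L be a complete lattice which is upper continuous, and suppose Cen(L) is a complete atomistic sublattice of L. Then L is totally decomposable. -/
universe u

section helpers
variable {L : Type*} [Lattice L]

lemma neutral_inf_sup_s3 {p : L} (hp : IsNeutral p) {s : L} (hs : s ≤ p) (t : L) :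
    p ⊓ (s ⊔ t) = s ⊔ (p ⊓ t) := by
  refine le_antisymm ?_ (sup_le (le_inf hs le_sup_left) (inf_le_inf le_rfl le_sup_right))
  calc p ⊓ (s ⊔ t) = (p ⊔ s) ⊓ (p ⊔ t) ⊓ (s ⊔ t) := by
        rw [sup_eq_left.2 hs, inf_of_le_left (le_sup_left : p ≤ p ⊔ t)]
    _ = (p ⊓ s) ⊔ (p ⊓ t) ⊔ (s ⊓ t) := hp s t
    _ ≤ s ⊔ (p ⊓ t) := by
        refine sup_le (sup_le ?_ le_sup_right) ?_
        · exact le_sup_of_le_left (inf_le_right)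
        · exact le_sup_of_le_left inf_le_left

section bdd
variable [BoundedOrder L]

lemma neutral_decomp {p w : L} (hp : IsNeutral p) (hw1 : p ⊓ w = ⊥) (hw2 : p ⊔ w = ⊤)
    (x : L) : x = (p ⊓ x) ⊔ (w ⊓ x) := by
  have h := hp x w
  rw [hw2, inf_top_eq, hw1, sup_bot_eq] at h
  refine le_antisymm ?_ (sup_le inf_le_right inf_le_right)
  have hx : x ≤ (p ⊔ x) ⊓ (x ⊔ w) := le_inf le_sup_right le_sup_left
  calc x ≤ p ⊓ x ⊔ x ⊓ w := h ▸ hx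
    _ ≤ p ⊓ x ⊔ w ⊓ x := by rw [inf_comm x w]

lemma compl_inf_sup {p w : L} (hp : IsNeutral p) (hw1 : p ⊓ w = ⊥) (hw2 : p ⊔ w = ⊤)
    {s : L} (hs : s ≤ p) (d : L) : w ⊓ (s ⊔ d) = w ⊓ d := by
  set z := w ⊓ (s ⊔ d) with hz
  have hzw : z ≤ w := inf_le_left
  have h1 : p ⊓ z = ⊥ := le_bot_iff.1 (le_trans (inf_le_inf le_rfl hzw) hw1.le)
  have h2 : p ⊓ (w ⊓ d) = ⊥ := by rw [← inf_assoc, hw1, bot_inf_eq]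
  have h3 : w ⊓ d ≤ z := le_inf inf_le_left (le_sup_of_le_right inf_le_right)
  have h := hp z (w ⊓ d)
  rw [h1, h2, bot_sup_eq, bot_sup_eq, inf_of_le_right h3, sup_of_le_left h3] at h
  have hle : z ≤ p ⊔ w ⊓ d := by
    have hd : d ≤ p ⊔ w ⊓ d := by
      calc d = (p ⊓ d) ⊔ (w ⊓ d) := neutral_decomp hp hw1 hw2 d
        _ ≤ p ⊔ w ⊓ d := sup_le_sup_right inf_le_left _
    calc z ≤ s ⊔ d := inf_le_right
      _ ≤ p ⊔ w ⊓ d := sup_le (le_sup_of_le_left hs) hd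
  rw [← h]
  exact le_antisymm (le_inf (le_inf le_sup_right hle) le_rfl) inf_le_right

lemma central_inf_sup {p : L} (hp : IsCentral p) (x y : L) :
    p ⊓ (x ⊔ y) = (p ⊓ x) ⊔ (p ⊓ y) := by
  obtain ⟨hn, w, hw1, hw2⟩ := hp
  have hs : (p ⊓ x) ⊔ (p ⊓ y) ≤ p := sup_le inf_le_left inf_le_left
  have hxy : x ⊔ y = ((p ⊓ x) ⊔ (p ⊓ y)) ⊔ ((w ⊓ x) ⊔ (w ⊓ y)) := by
    calc x ⊔ y = ((p ⊓ x) ⊔ (w ⊓ x)) ⊔ ((p ⊓ y) ⊔ (w ⊓ y)) := by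
          rw [← neutral_decomp hn hw1 hw2 x, ← neutral_decomp hn hw1 hw2 y]
      _ = ((p ⊓ x) ⊔ (p ⊓ y)) ⊔ ((w ⊓ x) ⊔ (w ⊓ y)) := by ac_rfl
  rw [hxy, neutral_inf_sup_s3 hn hs]
  have : p ⊓ ((w ⊓ x) ⊔ (w ⊓ y)) = ⊥ := by
    refine le_bot_iff.1 ?_
    calc p ⊓ ((w ⊓ x) ⊔ (w ⊓ y)) ≤ p ⊓ w := inf_le_inf le_rfl (sup_le inf_le_left inf_le_left)
      _ = ⊥ := hw1
  rw [this, sup_bot_eq]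

lemma central_sup_inf {p : L} (hp : IsCentral p) (x d : L) :
    x ⊓ (p ⊔ d) = (x ⊓ p) ⊔ (x ⊓ d) := by
  obtain ⟨hn, w, hw1, hw2⟩ := hp
  refine le_antisymm ?_ (sup_le (inf_le_inf le_rfl le_sup_left) (inf_le_inf le_rfl le_sup_right))
  set z := x ⊓ (p ⊔ d) with hzdef
  have h1 : p ⊓ z ≤ x ⊓ p := le_inf (inf_le_right.trans inf_le_left) inf_le_left
  have h2 : w ⊓ z ≤ x ⊓ d := by
    have : w ⊓ z ≤ w ⊓ (p ⊔ d) := inf_le_inf le_rfl inf_le_right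
    rw [compl_inf_sup hn hw1 hw2 le_rfl d] at this
    exact le_inf (inf_le_right.trans inf_le_left) (this.trans inf_le_right)
  calc z = (p ⊓ z) ⊔ (w ⊓ z) := neutral_decomp hn hw1 hw2 z
    _ ≤ (x ⊓ p) ⊔ (x ⊓ d) := sup_le_sup h1 h2

lemma isNeutral_of {p r : L} (hbot : p ⊓ r = ⊥)
    (hdec : ∀ x, x = (p ⊓ x) ⊔ (r ⊓ x))
    (hpd : ∀ x y, p ⊓ (x ⊔ y) = (p ⊓ x) ⊔ (p ⊓ y))
    (hrd : ∀ x y, r ⊓ (x ⊔ y) = (r ⊓ x) ⊔ (r ⊓ y)) : IsNeutral p := by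
  intro x y
  set A := (p ⊔ x) ⊓ (p ⊔ y) ⊓ (x ⊔ y) with hA
  set B := (p ⊓ x) ⊔ (p ⊓ y) ⊔ (x ⊓ y) with hB
  have hpA : p ⊓ A = (p ⊓ x) ⊔ (p ⊓ y) := by
    have : p ≤ (p ⊔ x) ⊓ (p ⊔ y) := le_inf le_sup_left le_sup_left
    rw [hA, ← inf_assoc, inf_of_le_left this, hpd]
  have hpB : p ⊓ B = (p ⊓ x) ⊔ (p ⊓ y) := by
    rw [hB, hpd, hpd, ← inf_assoc, inf_idem, ← inf_assoc, inf_idem]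
    exact sup_eq_left.2 (le_trans (inf_le_inf le_rfl inf_le_left) le_sup_left)
  have e1 : r ⊓ (p ⊔ x) = r ⊓ x := by rw [hrd, inf_comm r p, hbot, bot_sup_eq]
  have e2 : r ⊓ (p ⊔ y) = r ⊓ y := by rw [hrd, inf_comm r p, hbot, bot_sup_eq]
  have hrA : r ⊓ A = r ⊓ (x ⊓ y) := by
    have step : r ⊓ A = (r ⊓ (p ⊔ x)) ⊓ (r ⊓ (p ⊔ y)) ⊓ (r ⊓ (x ⊔ y)) := by
      rw [hA]; ac_rfl
    rw [step, e1, e2, hrd]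
    rw [inf_of_le_left (le_trans inf_le_left le_sup_left :
      r ⊓ x ⊓ (r ⊓ y) ≤ (r ⊓ x) ⊔ (r ⊓ y))]
    calc r ⊓ x ⊓ (r ⊓ y) = (r ⊓ r) ⊓ (x ⊓ y) := by ac_rfl
      _ = r ⊓ (x ⊓ y) := by rw [inf_idem]
  have hrB : r ⊓ B = r ⊓ (x ⊓ y) := by
    rw [hB, hrd, hrd, ← inf_assoc, ← inf_assoc]
    rw [inf_comm r p, hbot, bot_inf_eq, bot_inf_eq, bot_sup_eq, bot_sup_eq]
  calc A = (p ⊓ A) ⊔ (r ⊓ A) := hdec A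
    _ = (p ⊓ B) ⊔ (r ⊓ B) := by rw [hpA, hpB, hrA, hrB]
    _ = B := (hdec B).symm

lemma central_inf_finsetSup {p : L} (hp : IsCentral p) {ι : Type*} (g : ι → L)
    (s : Finset ι) : p ⊓ s.sup g = s.sup fun i => p ⊓ g i := by
  induction s using Finset.cons_induction with
  | empty => simp
  | cons v s hvs ih => rw [Finset.sup_cons, Finset.sup_cons, central_inf_sup hp, ih]

end bdd
end helpers

section complete
variable {L : Type u} [CompleteLattice L]

lemma inf_iSup_le
    (hUC : ∀ (x : L) (D : Set L), D.Nonempty → DirectedOn (· ≤ ·) D →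
      x ⊓ sSup D = ⨆ d ∈ D, x ⊓ d)
    {ι : Type*} (g : ι → L) (x c : L)
    (h : ∀ s : Finset ι, x ⊓ s.sup g ≤ c) : x ⊓ (⨆ i, g i) ≤ c := by
  classical
  set D : Set L := Set.range fun s : Finset ι => s.sup g with hD
  have hiD : (⨆ i, g i) = sSup D := by
    apply le_antisymm
    · exact iSup_le fun i => le_sSup ⟨{i}, Finset.sup_singleton⟩
    · refine sSup_le ?_
      rintro d ⟨s, rfl⟩
      exact Finset.sup_le fun i _ => le_iSup g i
  have hne : D.Nonempty := ⟨(∅ : Finset ι).sup g, ⟨∅, rfl⟩⟩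
  have hdir : DirectedOn (· ≤ ·) D := by
    rintro d₁ ⟨s₁, rfl⟩ d₂ ⟨s₂, rfl⟩
    exact ⟨(s₁ ∪ s₂).sup g, ⟨s₁ ∪ s₂, rfl⟩,
      Finset.sup_mono Finset.subset_union_left, Finset.sup_mono Finset.subset_union_right⟩
  rw [hiD, hUC x D hne hdir]
  refine iSup₂_le ?_
  rintro d ⟨s, rfl⟩
  exact h s

/-- An interval below a center atom is directly indecomposable. -/
lemma iic_indecomposable {a : L} (ha : IsCenterAtom a) :
    DirectlyIndecomposable ↥(Set.Iic a) := by
  rintro A B ⟨g⟩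
  by_contra hcon
  push_neg at hcon
  obtain ⟨hA, hB⟩ := hcon
  have hAbt : (⊥ : A) ≠ ⊤ := fun h => (not_subsingleton_iff_nontrivial.2 hA) (subsingleton_of_bot_eq_top h)
  have hBbt : (⊥ : B) ≠ ⊤ := fun h => (not_subsingleton_iff_nontrivial.2 hB) (subsingleton_of_bot_eq_top h)
  obtain ⟨⟨hna, w, hw1, hw2⟩, hane, hmin⟩ := ha
  have hacen : IsCentral a := ⟨hna, w, hw1, hw2⟩
  set P : Set.Iic a := g.symm (⊤, ⊥) with hPdef
  set Q : Set.Iic a := g.symm (⊥, ⊤) with hQdef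
  have gP : g P = (⊤, ⊥) := g.apply_symm_apply _
  have gQ : g Q = (⊥, ⊤) := g.apply_symm_apply _
  -- decomposition inside Iic a
  have h3 : ∀ z : Set.Iic a, z = (P ⊓ z) ⊔ (Q ⊓ z) := by
    intro z
    apply g.injective
    rw [map_sup, map_inf, map_inf, gP, gQ]
    refine Prod.ext ?_ ?_ <;> simp
  have h4P : ∀ z₁ z₂ : Set.Iic a, P ⊓ (z₁ ⊔ z₂) = (P ⊓ z₁) ⊔ (P ⊓ z₂) := by
    intro z₁ z₂
    apply g.injective
    rw [map_inf, map_sup, map_sup, map_inf, map_inf, gP]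
    refine Prod.ext ?_ ?_ <;> simp
  have h4Q : ∀ z₁ z₂ : Set.Iic a, Q ⊓ (z₁ ⊔ z₂) = (Q ⊓ z₁) ⊔ (Q ⊓ z₂) := by
    intro z₁ z₂
    apply g.injective
    rw [map_inf, map_sup, map_sup, map_inf, map_inf, gQ]
    refine Prod.ext ?_ ?_ <;> simp
  set p : L := (P : L) with hpdef
  set q : L := (Q : L) with hqdef
  have hpa : p ≤ a := P.2
  have hqa : q ≤ a := Q.2
  have hpq : p ⊓ q = ⊥ := by
    have : P ⊓ Q = ⊥ := by
      apply g.injective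
      rw [map_inf, gP, gQ, map_bot]
      refine Prod.ext ?_ ?_ <;>
        simp [Prod.fst_bot, Prod.snd_bot, Prod.fst_top, Prod.snd_top]
    exact congrArg Subtype.val this
  have hpq2 : p ⊔ q = a := by
    have : P ⊔ Q = ⊤ := by
      apply g.injective
      rw [map_sup, gP, gQ, map_top]
      refine Prod.ext ?_ ?_ <;>
        simp [Prod.fst_bot, Prod.snd_bot, Prod.fst_top, Prod.snd_top]
    exact congrArg Subtype.val this
  have d3 : ∀ z : L, z ≤ a → z = (p ⊓ z) ⊔ (q ⊓ z) := fun z hz =>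
    congrArg Subtype.val (h3 ⟨z, hz⟩)
  have d4p : ∀ z₁ z₂ : L, z₁ ≤ a → z₂ ≤ a → p ⊓ (z₁ ⊔ z₂) = (p ⊓ z₁) ⊔ (p ⊓ z₂) :=
    fun z₁ z₂ h₁ h₂ => congrArg Subtype.val (h4P ⟨z₁, h₁⟩ ⟨z₂, h₂⟩)
  have d4q : ∀ z₁ z₂ : L, z₁ ≤ a → z₂ ≤ a → q ⊓ (z₁ ⊔ z₂) = (q ⊓ z₁) ⊔ (q ⊓ z₂) :=
    fun z₁ z₂ h₁ h₂ => congrArg Subtype.val (h4Q ⟨z₁, h₁⟩ ⟨z₂, h₂⟩)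
  -- full distributivity of p, q, w in L
  have adist : ∀ x y : L, a ⊓ (x ⊔ y) = (a ⊓ x) ⊔ (a ⊓ y) := central_inf_sup hacen
  have pdist : ∀ x y : L, p ⊓ (x ⊔ y) = (p ⊓ x) ⊔ (p ⊓ y) := by
    intro x y
    calc p ⊓ (x ⊔ y) = p ⊓ (a ⊓ (x ⊔ y)) := by
          rw [← inf_assoc, inf_eq_left.2 hpa]
      _ = p ⊓ ((a ⊓ x) ⊔ (a ⊓ y)) := by rw [adist]
      _ = (p ⊓ (a ⊓ x)) ⊔ (p ⊓ (a ⊓ y)) := d4p _ _ inf_le_left inf_le_left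
      _ = (p ⊓ x) ⊔ (p ⊓ y) := by
          rw [← inf_assoc, inf_eq_left.2 hpa, ← inf_assoc, inf_eq_left.2 hpa]
  have qdist : ∀ x y : L, q ⊓ (x ⊔ y) = (q ⊓ x) ⊔ (q ⊓ y) := by
    intro x y
    calc q ⊓ (x ⊔ y) = q ⊓ (a ⊓ (x ⊔ y)) := by
          rw [← inf_assoc, inf_eq_left.2 hqa]
      _ = q ⊓ ((a ⊓ x) ⊔ (a ⊓ y)) := by rw [adist]
      _ = (q ⊓ (a ⊓ x)) ⊔ (q ⊓ (a ⊓ y)) := d4q _ _ inf_le_left inf_le_left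
      _ = (q ⊓ x) ⊔ (q ⊓ y) := by
          rw [← inf_assoc, inf_eq_left.2 hqa, ← inf_assoc, inf_eq_left.2 hqa]
  have wdist : ∀ x y : L, w ⊓ (x ⊔ y) = (w ⊓ x) ⊔ (w ⊓ y) := by
    intro x y
    have hs : (a ⊓ x) ⊔ (a ⊓ y) ≤ a := sup_le inf_le_left inf_le_left
    have hxy : x ⊔ y = ((a ⊓ x) ⊔ (a ⊓ y)) ⊔ ((w ⊓ x) ⊔ (w ⊓ y)) := by
      calc x ⊔ y = ((a ⊓ x) ⊔ (w ⊓ x)) ⊔ ((a ⊓ y) ⊔ (w ⊓ y)) := by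
            rw [← neutral_decomp hna hw1 hw2 x, ← neutral_decomp hna hw1 hw2 y]
        _ = ((a ⊓ x) ⊔ (a ⊓ y)) ⊔ ((w ⊓ x) ⊔ (w ⊓ y)) := by ac_rfl
    rw [hxy, compl_inf_sup hna hw1 hw2 hs]
    exact inf_eq_right.2 (sup_le inf_le_left inf_le_left)
  set r : L := q ⊔ w with hrdef
  have har : a ⊓ r = q := by
    rw [hrdef, neutral_inf_sup_s3 hna hqa w, hw1, sup_bot_eq]
  have hbot : p ⊓ r = ⊥ := by
    calc p ⊓ r = p ⊓ (a ⊓ r) := by rw [← inf_assoc, inf_eq_left.2 hpa]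
      _ = p ⊓ q := by rw [har]
      _ = ⊥ := hpq
  have htop' : p ⊔ r = ⊤ := by rw [hrdef, ← sup_assoc, hpq2, hw2]
  have hdec : ∀ x : L, x = (p ⊓ x) ⊔ (r ⊓ x) := by
    intro x
    refine le_antisymm ?_ (sup_le inf_le_right inf_le_right)
    calc x = (a ⊓ x) ⊔ (w ⊓ x) := neutral_decomp hna hw1 hw2 x
      _ = ((p ⊓ (a ⊓ x)) ⊔ (q ⊓ (a ⊓ x))) ⊔ (w ⊓ x) := by
          rw [← d3 (a ⊓ x) inf_le_left]
      _ ≤ (p ⊓ x) ⊔ (r ⊓ x) := by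
          refine sup_le (sup_le ?_ ?_) ?_
          · exact le_sup_of_le_left (le_inf inf_le_left (inf_le_right.trans inf_le_right))
          · exact le_sup_of_le_right
              (le_inf (inf_le_left.trans le_sup_left) (inf_le_right.trans inf_le_right))
          · exact le_sup_of_le_right (inf_le_inf_right x le_sup_right)
  have rdist : ∀ x y : L, r ⊓ (x ⊔ y) = (r ⊓ x) ⊔ (r ⊓ y) := by
    have hrz : ∀ z : L, r ⊓ z = (q ⊓ z) ⊔ (w ⊓ z) := by
      intro z
      calc r ⊓ z = (a ⊓ (r ⊓ z)) ⊔ (w ⊓ (r ⊓ z)) := neutral_decomp hna hw1 hw2 _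
        _ = (q ⊓ z) ⊔ (w ⊓ z) := by
            rw [← inf_assoc, har, ← inf_assoc, inf_eq_left.2 (le_sup_right : w ≤ r)]
    intro x y
    rw [hrz (x ⊔ y), qdist, wdist, hrz x, hrz y]
    ac_rfl
  have hcentral : IsCentral p :=
    ⟨isNeutral_of hbot hdec pdist rdist, r, hbot, htop'⟩
  have hpne : p ≠ ⊥ := by
    intro h
    have hPbot : P = ⊥ := Subtype.ext h
    have h2 : ((⊤, ⊥) : ↥A × ↥B) = ⊥ := by rw [← gP, hPbot, map_bot]
    exact hAbt (congrArg Prod.fst h2).symm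
  have hplt : p < a := by
    refine lt_of_le_of_ne hpa fun h => ?_
    have hPtop : P = ⊤ := Subtype.ext h
    have h2 : ((⊤, ⊥) : ↥A × ↥B) = ⊤ := by rw [← gP, hPtop, map_top]
    exact hBbt (congrArg Prod.snd h2)
  exact hpne (hmin p hcentral hplt)

end complete

/-- An upper continuous complete lattice whose center is a complete atomistic
sublattice is totally decomposable. -/
theorem totallyDecomposable_of_upperContinuous {L : Type u} [CompleteLattice L]
    (hUC : ∀ (x : L) (D : Set L), D.Nonempty → DirectedOn (· ≤ ·) D →
      x ⊓ sSup D = ⨆ d ∈ D, x ⊓ d)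
    (hCpl : ∀ S : Set L, (∀ a ∈ S, IsCentral a) → IsCentral (sSup S) ∧ IsCentral (sInf S))
    (hAtic : ∀ a : L, IsCentral a → a = sSup {u : L | IsCenterAtom u ∧ u ≤ a}) :
    TotallyDecomposable L := by
  classical
  have htop : IsCentral (⊤ : L) := by
    refine ⟨fun x y => ?_, ⊥, inf_bot_eq ⊤, sup_bot_eq ⊤⟩
    simp only [top_sup_eq, top_inf_eq, inf_top_eq, inf_idem]
    exact (sup_eq_left.2 (le_sup_of_le_left inf_le_left)).symm
  have hdisj : ∀ u v : L, IsCenterAtom u → IsCenterAtom v → u ≠ v → u ⊓ v = ⊥ := by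
    intro u v hu hv huv
    have hc : IsCentral (u ⊓ v) := by
      have := (hCpl {u, v} (by rintro a (rfl | rfl); exacts [hu.1, hv.1])).2
      rwa [sInf_pair] at this
    rcases eq_or_lt_of_le (inf_le_left : u ⊓ v ≤ u) with h | h
    · exfalso
      have huv' : u ≤ v := inf_eq_left.1 h
      exact hu.2.1 (hv.2.2 u hu.1 (lt_of_le_of_ne huv' huv))
    · exact hu.2.2 _ hc h
  set ι := {u : L // IsCenterAtom u} with hι
  have htopsup : (⊤ : L) = ⨆ u : ι, u.val := by
    have h := hAtic ⊤ htop
    refine le_antisymm ?_ le_top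
    rw [h]
    exact sSup_le fun b hb => le_iSup_of_le ⟨b, hb.1⟩ le_rfl
  have hdecx : ∀ x : L, x = ⨆ u : ι, (u.val ⊓ x) := by
    intro x
    refine le_antisymm ?_ (iSup_le fun u => inf_le_right)
    calc x = x ⊓ ⨆ u : ι, u.val := by rw [← htopsup, inf_top_eq]
      _ ≤ ⨆ u : ι, u.val ⊓ x := by
        refine inf_iSup_le hUC _ x _ fun s => ?_
        induction s using Finset.cons_induction with
        | empty => simp
        | cons v s hvs ih =>
            rw [Finset.sup_cons, central_sup_inf v.2.1]
            exact sup_le (le_iSup_of_le v (inf_comm x v.val).le) ih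
  have phi_right : ∀ (f : ∀ u : ι, Set.Iic u.val) (u : ι),
      u.val ⊓ (⨆ v : ι, ((f v : L))) = (f u : L) := by
    intro f u
    refine le_antisymm ?_ (le_inf (f u).2 (le_iSup (fun v => ((f v : L))) u))
    refine inf_iSup_le hUC _ _ _ fun s => ?_
    rw [central_inf_finsetSup u.2.1]
    refine Finset.sup_le fun v _ => ?_
    by_cases hvu : v = u
    · subst hvu; exact inf_le_right
    · have h1 : u.val ⊓ (f v : L) ≤ u.val ⊓ v.val := inf_le_inf le_rfl (f v).2
      have h2 : u.val ⊓ v.val = ⊥ :=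
        hdisj u.val v.val u.2 v.2 fun h => hvu (Subtype.ext h.symm)
      rw [h2] at h1
      exact h1.trans bot_le
  have iso : L ≃o ∀ u : ι, Set.Iic u.val := by
    refine
      { toFun := fun x u => ⟨u.val ⊓ x, inf_le_left⟩
        invFun := fun f => ⨆ u : ι, ((f u : L))
        left_inv := fun x => (hdecx x).symm
        right_inv := fun f => funext fun u => Subtype.ext (phi_right f u)
        map_rel_iff' := ?_ }
    intro x y
    constructor
    · intro h
      calc x = ⨆ u : ι, u.val ⊓ x := hdecx x
        _ ≤ ⨆ u : ι, u.val ⊓ y := iSup_mono fun u => h u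
        _ = y := (hdecx y).symm
    · intro h u
      exact inf_le_inf le_rfl h
  exact ⟨ι, fun u => BddLat.of (Set.Iic u.val), fun u => iic_indecomposable u.2, ⟨iso⟩⟩
end

section
/- Let L be a complete lattice which is separative (for all x,y ∈ L with x ≰ y there exists z with 0 < z ≤ x and z ∧ y = 0), and suppose Cen(L) is a complete atomistic sublattice of L. Then for every x ∈ L, x = ⋁_{u atom of Cen(L)} (x ∧ u), and hence L is totally decomposable. -/
universe u

section aux
variable {L : Type*} [Lattice L] [BoundedOrder L] {a b : L}

lemma neutral_split (hn : IsNeutral a) (hib : a ⊓ b = ⊥) (hsb : a ⊔ b = ⊤) (x : L) :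
    (x ⊓ a) ⊔ (x ⊓ b) = x := by
  have h := hn x b
  rw [hib, hsb] at h
  simp only [inf_top_eq, sup_bot_eq, inf_comm a x] at h
  have h1 : x ≤ (a ⊔ x) ⊓ (x ⊔ b) := le_inf le_sup_right le_sup_left
  have h2 : (x ⊓ a) ⊔ (x ⊓ b) ≤ x := sup_le inf_le_left inf_le_left
  exact le_antisymm h2 (h ▸ h1)

lemma neutral_proj (hn : IsNeutral a) (hib : a ⊓ b = ⊥) {p q : L}
    (hp : p ≤ a) (hq : q ≤ b) : (p ⊔ q) ⊓ a = p := by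
  have h := hn p q
  have e1 : a ⊔ p = a := sup_eq_left.2 hp
  have e2 : a ⊓ p = p := inf_eq_right.2 hp
  have e3 : a ⊓ q = ⊥ := le_bot_iff.1 (hib ▸ inf_le_inf_left a hq)
  have e4 : p ⊓ q = ⊥ := le_bot_iff.1 (hib ▸ inf_le_inf hp hq)
  have e5 : a ⊓ (a ⊔ q) = a := inf_eq_left.2 le_sup_left
  rw [e1, e2, e3, e4, sup_bot_eq, sup_bot_eq, inf_assoc, ← inf_assoc, e5] at h
  rw [inf_comm]; exact h

lemma neutral_proj' (hn : IsNeutral a) (hib : a ⊓ b = ⊥) {p q : L}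
    (hp : p ≤ a) (hq : q ≤ b) : (p ⊔ q) ⊓ b = q := by
  set r := (p ⊔ q) ⊓ b with hr
  have hqr : q ≤ r := le_inf le_sup_right hq
  have hrb : r ≤ b := inf_le_right
  have hrpq : r ≤ p ⊔ q := inf_le_left
  have h := hn q r
  have e1 : a ⊓ q = ⊥ := le_bot_iff.1 (hib ▸ inf_le_inf_left a hq)
  have e2 : a ⊓ r = ⊥ := le_bot_iff.1 (hib ▸ inf_le_inf_left a hrb)
  have e3 : q ⊓ r = q := inf_eq_left.2 hqr
  have e4 : q ⊔ r = r := sup_eq_right.2 hqr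
  rw [e1, e2, e3, e4, sup_bot_eq, bot_sup_eq] at h
  have h5 : r ≤ (a ⊔ q) ⊓ (a ⊔ r) ⊓ r :=
    le_inf (le_inf (hrpq.trans (sup_le (hp.trans le_sup_left) le_sup_right)) le_sup_right) le_rfl
  have h6 : (a ⊔ q) ⊓ (a ⊔ r) ⊓ r ≤ r := inf_le_right
  have h7 : (a ⊔ q) ⊓ (a ⊔ r) ⊓ r = r := le_antisymm h6 h5
  rw [h7] at h
  exact h

/-- The two-factor decomposition along a central element. -/
def centralIso (hn : IsNeutral a) (hib : a ⊓ b = ⊥) (hsb : a ⊔ b = ⊤) :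
    L ≃o Set.Iic a × Set.Iic b where
  toFun x := (⟨x ⊓ a, inf_le_right⟩, ⟨x ⊓ b, inf_le_right⟩)
  invFun p := (p.1 : L) ⊔ (p.2 : L)
  left_inv x := neutral_split hn hib hsb x
  right_inv p := by
    ext
    · exact neutral_proj hn hib p.1.2 p.2.2
    · exact neutral_proj' hn hib p.1.2 p.2.2
  map_rel_iff' := by
    intro x y
    constructor
    · intro h
      calc x = (x ⊓ a) ⊔ (x ⊓ b) := (neutral_split hn hib hsb x).symm
        _ ≤ (y ⊓ a) ⊔ (y ⊓ b) := sup_le_sup h.1 h.2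
        _ = y := neutral_split hn hib hsb y
    · intro h
      exact ⟨inf_le_inf_right a h, inf_le_inf_right b h⟩

lemma neutral_of_orderIso {M N : Type*} [Lattice M] [Lattice N] (e : M ≃o N) {c : M}
    (hc : IsNeutral c) : IsNeutral (e c) := by
  intro x y
  have := hc (e.symm x) (e.symm y)
  apply e.symm.injective
  simp only [map_inf, map_sup, e.symm_apply_apply, this]

lemma central_of_orderIso {M N : Type*} [Lattice M] [Lattice N] [BoundedOrder M]
    [BoundedOrder N] (e : M ≃o N) {c : M} (hc : IsCentral c) : IsCentral (e c) := by
  obtain ⟨hn, d, hd1, hd2⟩ := hc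
  exact ⟨neutral_of_orderIso e hn, e d, by rw [← map_inf, hd1, e.map_bot],
    by rw [← map_sup, hd2, e.map_top]⟩

lemma neutral_prod {M N : Type*} [Lattice M] [Lattice N] {c : M} {d : N}
    (hc : IsNeutral c) (hd : IsNeutral d) : IsNeutral ((c, d) : M × N) := by
  intro x y
  exact Prod.ext (hc x.1 y.1) (hd x.2 y.2)

lemma neutral_top : IsNeutral (⊤ : L) := by
  intro x y; simp
lemma neutral_bot : IsNeutral (⊥ : L) := by
  intro x y; simp
lemma central_top : IsCentral (⊤ : L) := ⟨neutral_top, ⊥, by simp, by simp⟩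
lemma central_bot : IsCentral (⊥ : L) := ⟨neutral_bot, ⊤, by simp, by simp⟩

lemma central_prod {M N : Type*} [Lattice M] [Lattice N] [BoundedOrder M] [BoundedOrder N]
    {c : M} {d : N} (hc : IsCentral c) (hd : IsCentral d) : IsCentral ((c, d) : M × N) := by
  obtain ⟨hnc, c', hc1, hc2⟩ := hc
  obtain ⟨hnd, d', hd1, hd2⟩ := hd
  refine ⟨neutral_prod hnc hnd, (c', d'), ?_, ?_⟩
  · exact Prod.ext (by simpa using hc1) (by simpa using hd1)
  · exact Prod.ext (by simpa using hc2) (by simpa using hd2)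

/-- the complement of a central element is central -/
lemma central_compl (hn : IsNeutral a) (hib : a ⊓ b = ⊥) (hsb : a ⊔ b = ⊤) :
    IsCentral b := by
  set e := centralIso hn hib hsb with he
  have h1 : IsCentral ((⟨⊥, bot_le⟩, ⟨b, le_rfl⟩) : Set.Iic a × Set.Iic b) := by
    have hb : IsCentral (⟨b, le_rfl⟩ : Set.Iic b) := by
      have : (⟨b, le_rfl⟩ : Set.Iic b) = ⊤ := rfl
      rw [this]; exact central_top
    have hbot : IsCentral (⟨⊥, bot_le⟩ : Set.Iic a) := by
      have : (⟨⊥, bot_le⟩ : Set.Iic a) = ⊥ := rfl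
      rw [this]; exact central_bot
    exact central_prod hbot hb
  have h2 := central_of_orderIso e.symm h1
  have h3 : e b = (⟨⊥, bot_le⟩, ⟨b, le_rfl⟩) := by
    have : e b = (⟨b ⊓ a, inf_le_right⟩, ⟨b ⊓ b, inf_le_right⟩) := by rw [he]; rfl
    rw [this]
    ext
    · show b ⊓ a = ⊥; rw [inf_comm]; exact hib
    · show b ⊓ b = b; exact inf_idem b
  rw [← h3, e.symm_apply_apply] at h2
  exact h2

lemma subsingleton_of_bot_eq_top' {M : Type*} [Lattice M] [BoundedOrder M]
    (h : (⊥ : M) = ⊤) : Subsingleton M :=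
  ⟨fun x y => le_antisymm (le_top.trans (h.ge.trans bot_le))
    (le_top.trans (h.ge.trans bot_le))⟩

end aux

section cplt
variable {L : Type u} [CompleteLattice L]

/-- meet with a central element commutes with iSup -/
lemma central_inf_iSup {a : L} (hc : IsCentral a) {ι : Sort*} (g : ι → L) :
    (⨆ i, g i) ⊓ a = ⨆ i, g i ⊓ a := by
  obtain ⟨hn, b, hib, hsb⟩ := hc
  refine le_antisymm ?_ (le_inf (iSup_mono fun i => inf_le_left) (iSup_le fun i => inf_le_right))
  have h1 : (⨆ i, g i) ≤ (⨆ i, g i ⊓ a) ⊔ b := by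
    refine iSup_le fun i => ?_
    calc g i = (g i ⊓ a) ⊔ (g i ⊓ b) := (neutral_split hn hib hsb (g i)).symm
      _ ≤ (⨆ i, g i ⊓ a) ⊔ b := sup_le_sup (le_iSup (fun i => g i ⊓ a) i) inf_le_right
  calc (⨆ i, g i) ⊓ a ≤ ((⨆ i, g i ⊓ a) ⊔ b) ⊓ a := inf_le_inf_right a h1
    _ = ⨆ i, g i ⊓ a := neutral_proj hn hib (iSup_le fun i => inf_le_right) le_rfl

end cplt

/-- A separative complete lattice whose center is a complete atomistic sublattice
satisfies the decomposition equality (J), and hence is totally decomposable. -/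
theorem totallyDecomposable_of_separative {L : Type u} [CompleteLattice L]
    (hSep : ∀ x y : L, ¬x ≤ y → ∃ z : L, ⊥ < z ∧ z ≤ x ∧ z ⊓ y = ⊥)
    (hCpl : ∀ S : Set L, (∀ a ∈ S, IsCentral a) → IsCentral (sSup S) ∧ IsCentral (sInf S))
    (hAtic : ∀ a : L, IsCentral a → a = sSup {u : L | IsCenterAtom u ∧ u ≤ a}) :
    (∀ x : L, x = ⨆ u : {u : L // IsCenterAtom u}, x ⊓ (u : L)) ∧
      TotallyDecomposable L := by
  -- distinct center atoms are disjoint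
  have hdisj : ∀ u v : L, IsCenterAtom u → IsCenterAtom v → u ≠ v → u ⊓ v = ⊥ := by
    intro u v hu hv hne
    have hc : IsCentral (u ⊓ v) := by
      have := (hCpl {u, v} (by rintro a (rfl | rfl); exacts [hu.1, hv.1])).2
      rwa [sInf_pair] at this
    by_cases h : u ⊓ v = u
    · exfalso
      have huv : u ≤ v := h ▸ inf_le_right
      rcases lt_or_eq_of_le huv with hlt | heq
      · exact hu.2.1 (hv.2.2 u hu.1 hlt)
      · exact hne heq
    · exact hu.2.2 _ hc (lt_of_le_of_ne inf_le_left h)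
  -- the separativity argument: if z meets every center atom trivially, z = ⊥
  have hkill : ∀ z : L, (∀ u : L, IsCenterAtom u → z ⊓ u = ⊥) → z = ⊥ := by
    intro z hz
    set S : Set L := {b : L | IsCentral b ∧ ∃ u : L, IsCenterAtom u ∧ u ⊓ b = ⊥ ∧ u ⊔ b = ⊤}
      with hS
    have hwc : IsCentral (sInf S) := (hCpl S fun b hb => hb.1).2
    have hzw : z ≤ sInf S := by
      refine le_sInf fun b hb => ?_
      obtain ⟨hbc, u, hu, hub, hub'⟩ := hb
      have := neutral_split hu.1.1 hub hub' z
      rw [hz u hu, bot_sup_eq] at this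
      exact this ▸ inf_le_right
    have hempty : {u : L | IsCenterAtom u ∧ u ≤ sInf S} = ∅ := by
      ext v
      simp only [Set.mem_setOf_eq, Set.mem_empty_iff_false, iff_false, not_and]
      intro hv hvw
      obtain ⟨hn, b, hib, hsb⟩ := hv.1
      have hbS : b ∈ S := ⟨central_compl hn hib hsb, v, hv, hib, hsb⟩
      have hvb : v ≤ b := hvw.trans (sInf_le hbS)
      exact hv.2.1 (le_bot_iff.1 (hib ▸ le_inf le_rfl hvb))
    have hw : sInf S = ⊥ := by
      rw [hAtic _ hwc, hempty, sSup_empty]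
    exact le_bot_iff.1 (hw ▸ hzw)
  -- the decomposition equality (J)
  have hJ : ∀ x : L, x = ⨆ u : {u : L // IsCenterAtom u}, x ⊓ (u : L) := by
    intro x
    set s := ⨆ u : {u : L // IsCenterAtom u}, x ⊓ (u : L) with hs
    have hsx : s ≤ x := iSup_le fun u => inf_le_left
    refine le_antisymm ?_ hsx
    by_contra h
    obtain ⟨z, hz0, hzx, hzs⟩ := hSep x s h
    have : z = ⊥ := by
      refine hkill z fun u hu => ?_
      have h1 : z ⊓ u ≤ z ⊓ s :=
        le_inf inf_le_left ((inf_le_inf_right u hzx).trans (le_iSup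
          (fun v : {u : L // IsCenterAtom u} => x ⊓ (v : L)) ⟨u, hu⟩))
      exact le_bot_iff.1 (hzs ▸ h1)
    exact absurd this hz0.ne'
  refine ⟨hJ, ?_⟩
  -- the big direct decomposition
  set ι := {u : L // IsCenterAtom u} with hι
  have hcomp : ∀ p : ∀ u : ι, Set.Iic u.1, ∀ u : ι, (⨆ v : ι, (p v : L)) ⊓ u.1 = p u := by
    intro p u
    rw [central_inf_iSup u.2.1 fun v : ι => (p v : L)]
    refine le_antisymm (iSup_le fun v => ?_) ?_
    · by_cases hvu : v = u
      · subst hvu; exact inf_le_left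
      · have : (p v : L) ⊓ u.1 ≤ v.1 ⊓ u.1 := inf_le_inf_right _ (p v).2
        rw [hdisj v.1 u.1 v.2 u.2 (fun h => hvu (Subtype.ext h))] at this
        exact this.trans bot_le
    · exact le_iSup_of_le u (le_inf le_rfl (p u).2)
  have e : L ≃o ∀ u : ι, Set.Iic u.1 :=
    { toFun := fun x u => ⟨x ⊓ u.1, inf_le_right⟩
      invFun := fun p => ⨆ u : ι, (p u : L)
      left_inv := fun x => (hJ x).symm
      right_inv := fun p => funext fun u => Subtype.ext (hcomp p u)
      map_rel_iff' := by
        intro x y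
        constructor
        · intro h
          calc x = ⨆ u : ι, x ⊓ (u : L) := hJ x
            _ ≤ ⨆ u : ι, y ⊓ (u : L) := iSup_mono fun u => h u
            _ = y := (hJ y).symm
        · intro h u
          exact inf_le_inf_right _ h }
  -- each factor is directly indecomposable
  have hind : ∀ u : ι, DirectlyIndecomposable (Set.Iic u.1) := by
    intro u A B ⟨e2⟩
    obtain ⟨hn, b, hib, hsb⟩ := u.2.1
    set e1 := centralIso hn hib hsb with he1
    set c0 : Set.Iic u.1 := e2.symm (⊤, ⊥) with hc0
    have hc0c : IsCentral c0 :=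
      central_of_orderIso e2.symm (central_prod central_top central_bot)
    have hcL : IsCentral (c0 : L) := by
      have h1 : IsCentral ((c0, ⊥) : Set.Iic u.1 × Set.Iic b) := central_prod hc0c central_bot
      have h2 := central_of_orderIso e1.symm h1
      have h3 : e1 (c0 : L) = (c0, ⊥) := by
        have : e1 (c0 : L) = (⟨(c0 : L) ⊓ u.1, inf_le_right⟩, ⟨(c0 : L) ⊓ b, inf_le_right⟩) := by
          rw [he1]; rfl
        rw [this]
        ext
        · show (c0 : L) ⊓ u.1 = (c0 : L); exact inf_eq_left.2 c0.2
        · show (c0 : L) ⊓ b = (⊥ : L)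
          exact le_bot_iff.1 (hib ▸ inf_le_inf_right b c0.2)
      rw [← h3, e1.symm_apply_apply] at h2
      exact h2
    by_cases hcu : (c0 : L) = u.1
    · right
      have hct : c0 = ⊤ := Subtype.ext hcu
      have : ((⊤, ⊥) : ↥A × ↥B) = (⊤, ⊤) := by
        apply e2.symm.injective
        rw [← hc0, hct, ← e2.symm.map_top]
        rfl
      exact subsingleton_of_bot_eq_top' (by simpa using congrArg Prod.snd this)
    · left
      have hcb : (c0 : L) = ⊥ := u.2.2.2 _ hcL (lt_of_le_of_ne c0.2 hcu)
      have hct : c0 = ⊥ := Subtype.ext hcb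
      have : ((⊤, ⊥) : ↥A × ↥B) = (⊥, ⊥) := by
        apply e2.symm.injective
        rw [← hc0, hct, ← e2.symm.map_bot]
        rfl
      exact subsingleton_of_bot_eq_top' (by simpa using (congrArg Prod.fst this).symm)
  exact ⟨ι, fun u => BddLat.of (Set.Iic u.1), hind, ⟨e⟩⟩
end

section
/- Let L be a bounded lattice that is finitely spatial and dually finitely spatial (finitely bi-spatial). Let a, b ∈ L such that: (a) every join-irreducible p ≤ 1 satisfies p ≤ a or p ≤ b, and every join-irreducible p with (p ≤ a or p ≤ b) satisfies p ≤ 1 (i.e., a ∨* b = 1); and (b) dually, every meet-irreducible u with 0 ≤ u satisfies a ≤ u or b ≤ u (i.e., a ∧* b = 0). Then (a,b) is a complementary pair of central elements of L, and L ≅ [0,a] × [0,b]. -/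
universe u

/-- A lattice is *finitely spatial* if every element is the join of the
join-irreducible elements below it. -/
def FinitelySpatial (L : Type*) [Lattice L] : Prop :=
  ∀ x : L, IsLUB {p : L | SupIrred p ∧ p ≤ x} x

/-- A lattice is *dually finitely spatial* if every element is the meet of the
meet-irreducible elements above it. -/
def DuallyFinitelySpatial (L : Type*) [Lattice L] : Prop :=
  ∀ x : L, IsGLB {u : L | InfIrred u ∧ x ≤ u} x

-- auxiliary lemma
lemma neutral_aux {L : Type*} [Lattice L] [BoundedOrder L] (a b : L)
    (decomp : ∀ x : L, (x ⊓ a) ⊔ (x ⊓ b) = x)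
    (Ja : ∀ x y : L, (x ⊔ y) ⊓ a = (x ⊓ a) ⊔ (y ⊓ a))
    (Jb : ∀ x y : L, (x ⊔ y) ⊓ b = (x ⊓ b) ⊔ (y ⊓ b))
    (hab : a ⊓ b = ⊥) : IsNeutral a := by
  intro x y
  have key : ∀ z w : L, z ⊓ a = w ⊓ a → z ⊓ b = w ⊓ b → z = w := by
    intro z w h1 h2; rw [← decomp z, ← decomp w, h1, h2]
  apply key
  · -- meet with a
    have hL : (a ⊔ x) ⊓ (a ⊔ y) ⊓ (x ⊔ y) ⊓ a = (x ⊓ a) ⊔ (y ⊓ a) := by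
      have ha : a ≤ (a ⊔ x) ⊓ (a ⊔ y) := le_inf le_sup_left le_sup_left
      rw [inf_assoc, inf_eq_right.mpr (inf_le_right.trans ha), Ja]
    have hR : ((a ⊓ x) ⊔ (a ⊓ y) ⊔ (x ⊓ y)) ⊓ a = (x ⊓ a) ⊔ (y ⊓ a) := by
      rw [Ja, Ja]
      apply le_antisymm
      · apply sup_le (sup_le ?_ ?_) ?_
        · exact le_sup_of_le_left (le_inf (inf_le_left.trans inf_le_right) inf_le_right)
        · exact le_sup_of_le_right (le_inf (inf_le_left.trans inf_le_right) inf_le_right)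
        · exact le_sup_of_le_left (le_inf (inf_le_left.trans inf_le_left) inf_le_right)
      · apply sup_le
        · exact le_sup_of_le_left (le_sup_of_le_left (le_inf (le_inf inf_le_right inf_le_left) inf_le_right))
        · exact le_sup_of_le_left (le_sup_of_le_right (le_inf (le_inf inf_le_right inf_le_left) inf_le_right))
    rw [hL, hR]
  · -- meet with b
    have hxb : (a ⊔ x) ⊓ b = x ⊓ b := by rw [Jb, hab, bot_sup_eq]
    have hyb : (a ⊔ y) ⊓ b = y ⊓ b := by rw [Jb, hab, bot_sup_eq]
    have hL : (a ⊔ x) ⊓ (a ⊔ y) ⊓ (x ⊔ y) ⊓ b = x ⊓ y ⊓ b := by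
      apply le_antisymm
      · have hz1 : (a ⊔ x) ⊓ (a ⊔ y) ⊓ (x ⊔ y) ⊓ b ≤ x ⊓ b :=
          le_of_le_of_eq (le_inf (inf_le_left.trans (inf_le_left.trans inf_le_left))
            inf_le_right) hxb
        have hz2 : (a ⊔ x) ⊓ (a ⊔ y) ⊓ (x ⊔ y) ⊓ b ≤ y ⊓ b :=
          le_of_le_of_eq (le_inf (inf_le_left.trans (inf_le_left.trans inf_le_right))
            inf_le_right) hyb
        exact le_inf (le_inf (hz1.trans inf_le_left) (hz2.trans inf_le_left)) inf_le_right
      · exact le_inf (le_inf (le_inf (le_sup_of_le_right (inf_le_left.trans inf_le_left))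
          (le_sup_of_le_right (inf_le_left.trans inf_le_right)))
          (le_sup_of_le_left (inf_le_left.trans inf_le_left))) inf_le_right
    have hR : ((a ⊓ x) ⊔ (a ⊓ y) ⊔ (x ⊓ y)) ⊓ b = x ⊓ y ⊓ b := by
      rw [Jb, Jb]
      have h1 : (a ⊓ x) ⊓ b = ⊥ := le_antisymm
        (le_of_le_of_eq (le_inf (inf_le_left.trans inf_le_left) inf_le_right) hab) bot_le
      have h2 : (a ⊓ y) ⊓ b = ⊥ := le_antisymm
        (le_of_le_of_eq (le_inf (inf_le_left.trans inf_le_left) inf_le_right) hab) bot_le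
      rw [h1, h2, bot_sup_eq, bot_sup_eq]
    rw [hL, hR]

/-- In a finitely bi-spatial bounded lattice, if `a ∨* b = 1` and `a ∧* b = 0`,
then `(a, b)` is a complementary pair of central elements and
`L ≅ [0,a] × [0,b]`. -/
theorem central_complementary_of_star {L : Type u} [Lattice L] [BoundedOrder L]
    (hFS : FinitelySpatial L) (hDFS : DuallyFinitelySpatial L) (a b : L)
    (hsup : ∀ p : L, SupIrred p → (p ≤ (⊤ : L) ↔ p ≤ a ∨ p ≤ b))
    (hinf : ∀ u : L, InfIrred u → ((⊥ : L) ≤ u ↔ a ≤ u ∨ b ≤ u)) :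
    haveI : Fact ((⊥ : L) ≤ a) := ⟨bot_le⟩
    haveI : Fact ((⊥ : L) ≤ b) := ⟨bot_le⟩
    IsCentral a ∧ IsCentral b ∧ a ⊓ b = ⊥ ∧ a ⊔ b = ⊤ ∧
      Nonempty (L ≃o Set.Icc (⊥ : L) a × Set.Icc (⊥ : L) b) := by
  have hsup' : ∀ p : L, SupIrred p → p ≤ a ∨ p ≤ b := fun p hp => (hsup p hp).mp le_top
  have hinf' : ∀ u : L, InfIrred u → a ≤ u ∨ b ≤ u := fun u hu => (hinf u hu).mp bot_le
  have decomp : ∀ x : L, (x ⊓ a) ⊔ (x ⊓ b) = x := by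
    intro x
    refine le_antisymm (sup_le inf_le_left inf_le_left) ?_
    refine (hFS x).2 ?_
    rintro p ⟨hp, hpx⟩
    rcases hsup' p hp with h | h
    · exact le_sup_of_le_left (le_inf hpx h)
    · exact le_sup_of_le_right (le_inf hpx h)
  have proja : ∀ s t : L, s ≤ a → t ≤ b → (s ⊔ t) ⊓ a = s := by
    intro s t hs ht
    refine le_antisymm ?_ (le_inf le_sup_left hs)
    refine (hDFS s).2 ?_
    rintro u ⟨hu, hsu⟩
    rcases hinf' u hu with h | h
    · exact inf_le_right.trans h
    · exact inf_le_left.trans (sup_le hsu (ht.trans h))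
  have projb : ∀ s t : L, s ≤ a → t ≤ b → (s ⊔ t) ⊓ b = t := by
    intro s t hs ht
    refine le_antisymm ?_ (le_inf le_sup_right ht)
    refine (hDFS t).2 ?_
    rintro u ⟨hu, htu⟩
    rcases hinf' u hu with h | h
    · exact inf_le_left.trans (sup_le (hs.trans h) htu)
    · exact inf_le_right.trans h
  have hab : a ⊓ b = ⊥ := by
    have h := proja ⊥ b bot_le le_rfl
    rwa [bot_sup_eq, inf_comm] at h
  have hba : b ⊓ a = ⊥ := by rwa [inf_comm]
  have htop : a ⊔ b = ⊤ := by
    have h := decomp (⊤ : L)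
    rwa [top_inf_eq, top_inf_eq] at h
  have hbtop : b ⊔ a = ⊤ := by rwa [sup_comm]
  have Ja : ∀ x y : L, (x ⊔ y) ⊓ a = (x ⊓ a) ⊔ (y ⊓ a) := by
    intro x y
    have h : x ⊔ y = ((x ⊓ a) ⊔ (y ⊓ a)) ⊔ ((x ⊓ b) ⊔ (y ⊓ b)) := by
      conv_lhs => rw [← decomp x, ← decomp y]
      exact sup_sup_sup_comm _ _ _ _
    rw [h, proja _ _ (sup_le inf_le_right inf_le_right) (sup_le inf_le_right inf_le_right)]
  have Jb : ∀ x y : L, (x ⊔ y) ⊓ b = (x ⊓ b) ⊔ (y ⊓ b) := by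
    intro x y
    have h : x ⊔ y = ((x ⊓ a) ⊔ (y ⊓ a)) ⊔ ((x ⊓ b) ⊔ (y ⊓ b)) := by
      conv_lhs => rw [← decomp x, ← decomp y]
      exact sup_sup_sup_comm _ _ _ _
    rw [h, projb _ _ (sup_le inf_le_right inf_le_right) (sup_le inf_le_right inf_le_right)]
  have decomp' : ∀ x : L, (x ⊓ b) ⊔ (x ⊓ a) = x := fun x => by rw [sup_comm]; exact decomp x
  refine ⟨⟨neutral_aux a b decomp Ja Jb hab, b, hab, htop⟩,
    ⟨neutral_aux b a decomp' Jb Ja hba, a, hba, hbtop⟩, hab, htop, ⟨?_⟩⟩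
  exact
    { toFun := fun x => (⟨x ⊓ a, Set.mem_Icc.mpr ⟨bot_le, inf_le_right⟩⟩,
        ⟨x ⊓ b, Set.mem_Icc.mpr ⟨bot_le, inf_le_right⟩⟩)
      invFun := fun st => st.1.1 ⊔ st.2.1
      left_inv := fun x => decomp x
      right_inv := fun st => by
        obtain ⟨⟨s, hs⟩, ⟨t, ht⟩⟩ := st
        simp only [Prod.mk.injEq, Subtype.mk.injEq]
        exact ⟨proja s t hs.2 ht.2, projb s t hs.2 ht.2⟩
      map_rel_iff' := by
        intro x y
        simp only [Equiv.coe_fn_mk, Prod.mk_le_mk, Subtype.mk_le_mk]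
        constructor
        · rintro ⟨h1, h2⟩
          calc x = (x ⊓ a) ⊔ (x ⊓ b) := (decomp x).symm
            _ ≤ (y ⊓ a) ⊔ (y ⊓ b) := sup_le_sup h1 h2
            _ = y := decomp y
        · intro h
          exact ⟨inf_le_inf_right a h, inf_le_inf_right b h⟩ }
end

section
/- Let L be a finitely bi-spatial complete lattice. Then the center Cen(L) is a complete sublattice of L: arbitrary joins and meets (computed in L) of families of central elements are central, and the join of a family of central elements a_i has complement the meet of the complements ¬a_i. -/
universe u

section Aux

variable {L : Type*} [CompleteLattice L]

lemma decompJ_aux (hFS : FinitelySpatial L) {s t : L}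
    (hD1 : ∀ p : L, SupIrred p → p ≤ s ∨ p ≤ t) (x : L) :
    x ≤ (x ⊓ s) ⊔ (x ⊓ t) := by
  refine (hFS x).2 fun p hp => ?_
  obtain ⟨hpi, hpx⟩ := hp
  rcases hD1 p hpi with h | h
  · exact le_sup_of_le_left (le_inf hpx h)
  · exact le_sup_of_le_right (le_inf hpx h)

lemma decompM_aux (hDFS : DuallyFinitelySpatial L) {s t : L}
    (hD2 : ∀ u : L, InfIrred u → s ≤ u ∨ t ≤ u) (x : L) :
    (x ⊔ s) ⊓ (x ⊔ t) ≤ x := by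
  refine (hDFS x).2 fun u hu => ?_
  obtain ⟨hui, hxu⟩ := hu
  rcases hD2 u hui with h | h
  · exact inf_le_of_left_le (sup_le hxu h)
  · exact inf_le_of_right_le (sup_le hxu h)

lemma dist_aux (hFS : FinitelySpatial L) (hDFS : DuallyFinitelySpatial L) {s t : L}
    (hD1 : ∀ p : L, SupIrred p → p ≤ s ∨ p ≤ t)
    (hD2 : ∀ u : L, InfIrred u → s ≤ u ∨ t ≤ u) (x y : L) :
    s ⊓ (x ⊔ y) ≤ (s ⊓ x) ⊔ (s ⊓ y) := by
  refine (hDFS ((s ⊓ x) ⊔ (s ⊓ y))).2 fun u hu => ?_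
  obtain ⟨hui, hru⟩ := hu
  rcases hD2 u hui with h | h
  · exact inf_le_of_left_le h
  · have hz : ∀ z : L, s ⊓ z ≤ u → z ≤ u := fun z hzu =>
      (decompJ_aux hFS hD1 z).trans
        (sup_le ((inf_comm z s).le.trans hzu) (inf_le_right.trans h))
    have hx : x ≤ u := hz x (le_sup_left.trans hru)
    have hy : y ≤ u := hz y (le_sup_right.trans hru)
    exact inf_le_of_right_le (sup_le hx hy)

lemma key_aux (hFS : FinitelySpatial L) (hDFS : DuallyFinitelySpatial L) (s t : L)
    (hD1 : ∀ p : L, SupIrred p → p ≤ s ∨ p ≤ t)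
    (hD2 : ∀ u : L, InfIrred u → s ≤ u ∨ t ≤ u) :
    s ⊓ t = ⊥ ∧ s ⊔ t = ⊤ ∧ IsCentral s := by
  have hbot : s ⊓ t = ⊥ := by
    refine le_antisymm ((hDFS ⊥).2 fun u hu => ?_) bot_le
    rcases hD2 u hu.1 with h | h
    · exact inf_le_of_left_le h
    · exact inf_le_of_right_le h
  have htop : s ⊔ t = ⊤ := by
    refine le_antisymm le_top ((hFS ⊤).2 fun p hp => ?_)
    rcases hD1 p hp.1 with h | h
    · exact le_sup_of_le_left h
    · exact le_sup_of_le_right h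
  refine ⟨hbot, htop, ?_, t, hbot, htop⟩
  intro x y
  refine le_antisymm ?_ ?_
  · -- LHS ≤ (LHS ⊓ s) ⊔ (LHS ⊓ t) ≤ RHS
    set LHS := (s ⊔ x) ⊓ (s ⊔ y) ⊓ (x ⊔ y) with hL
    have h1 : LHS ⊓ s ≤ (s ⊓ x) ⊔ (s ⊓ y) := by
      have : LHS ⊓ s ≤ s ⊓ (x ⊔ y) :=
        le_inf inf_le_right (inf_le_left.trans inf_le_right)
      exact this.trans (dist_aux hFS hDFS hD1 hD2 x y)
    have hxt : ∀ z : L, (s ⊔ z) ⊓ t ≤ z := fun z =>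
      (le_inf (inf_le_left.trans (sup_comm s z).le)
        (inf_le_right.trans le_sup_right)).trans (decompM_aux hDFS hD2 z)
    have h2 : LHS ⊓ t ≤ x ⊓ y :=
      le_inf ((le_inf (inf_le_left.trans (inf_le_left.trans inf_le_left))
            inf_le_right).trans (hxt x))
        ((le_inf (inf_le_left.trans (inf_le_left.trans inf_le_right))
            inf_le_right).trans (hxt y))
    calc LHS ≤ (LHS ⊓ s) ⊔ (LHS ⊓ t) := decompJ_aux hFS hD1 LHS
      _ ≤ (s ⊓ x) ⊔ (s ⊓ y) ⊔ (x ⊓ y) := sup_le (h1.trans le_sup_left)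
          (h2.trans le_sup_right)
  · -- median inequality, holds in any lattice
    refine sup_le (sup_le ?_ ?_) ?_
    · exact le_inf (le_inf (inf_le_left.trans le_sup_left)
        (inf_le_left.trans le_sup_left)) (inf_le_right.trans le_sup_left)
    · exact le_inf (le_inf (inf_le_left.trans le_sup_left)
        (inf_le_right.trans le_sup_right)) (inf_le_right.trans le_sup_right)
    · exact le_inf (le_inf (inf_le_left.trans le_sup_right)
        (inf_le_right.trans le_sup_right)) (inf_le_left.trans le_sup_left)

end Aux

/-- In a finitely bi-spatial complete lattice, the center is a complete
sublattice: arbitrary joins and meets of central elements are central, and the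
join of a family of central elements has complement the meet of the
complements. -/
theorem center_completeSublattice {L : Type u} [CompleteLattice L]
    (hFS : FinitelySpatial L) (hDFS : DuallyFinitelySpatial L) :
    ∀ (ι : Type u) (a c : ι → L), (∀ i, IsCentral (a i)) →
      (∀ i, a i ⊓ c i = ⊥ ∧ a i ⊔ c i = ⊤) →
      IsCentral (⨆ i, a i) ∧ IsCentral (⨅ i, a i) ∧
        (⨆ i, a i) ⊓ ⨅ i, c i = ⊥ ∧ (⨆ i, a i) ⊔ ⨅ i, c i = ⊤ := by
  intro ι a c ha hc
  -- pointwise decompositions coming from neutrality of each `a i`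
  have hdec : ∀ (i : ι) (x : L),
      x = (a i ⊓ x) ⊔ (c i ⊓ x) ∧ x = (a i ⊔ x) ⊓ (c i ⊔ x) := by
    intro i x
    have hn := (ha i).1 x (c i)
    rw [(hc i).1, (hc i).2] at hn
    -- hn : (a i ⊔ x) ⊓ ⊤ ⊓ (x ⊔ c i) = a i ⊓ x ⊔ ⊥ ⊔ (x ⊓ c i)
    rw [inf_top_eq, sup_bot_eq] at hn
    have hle1 : x ≤ (a i ⊔ x) ⊓ (x ⊔ c i) := le_inf le_sup_right le_sup_left
    have hle2 : a i ⊓ x ⊔ x ⊓ c i ≤ x := sup_le inf_le_right inf_le_left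
    have hx : x = a i ⊓ x ⊔ x ⊓ c i := le_antisymm (hn ▸ hle1) hle2
    have hx' : x = (a i ⊔ x) ⊓ (x ⊔ c i) := le_antisymm hle1 (hn ▸ hle2)
    constructor
    · rw [inf_comm (c i) x]; exact hx
    · rw [sup_comm (c i) x]; exact hx'
  -- splitting of sup-irreducibles and inf-irreducibles by each pair (a i, c i)
  have hsplitJ : ∀ (i : ι) (p : L), SupIrred p → p ≤ a i ∨ p ≤ c i := by
    intro i p hp
    rcases hp.2 (hdec i p).1.symm with h | h
    · exact Or.inl (h.symm.le.trans inf_le_left)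
    · exact Or.inr (h.symm.le.trans inf_le_left)
  have hsplitM : ∀ (i : ι) (u : L), InfIrred u → a i ≤ u ∨ c i ≤ u := by
    intro i u hu
    rcases hu.2 (hdec i u).2.symm with h | h
    · exact Or.inl (le_sup_left.trans h.le)
    · exact Or.inr (le_sup_left.trans h.le)
  -- dichotomies for (⨆ a, ⨅ c)
  have hD1 : ∀ p : L, SupIrred p → p ≤ ⨆ i, a i ∨ p ≤ ⨅ i, c i := by
    intro p hp
    by_cases h : ∃ i, p ≤ a i
    · obtain ⟨i, hi⟩ := h
      exact Or.inl (hi.trans (le_iSup a i))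
    · push_neg at h
      refine Or.inr (le_iInf fun i => ?_)
      rcases hsplitJ i p hp with h' | h'
      · exact absurd h' (h i)
      · exact h'
  have hD2 : ∀ u : L, InfIrred u → (⨆ i, a i) ≤ u ∨ (⨅ i, c i) ≤ u := by
    intro u hu
    by_cases h : ∃ i, c i ≤ u
    · obtain ⟨i, hi⟩ := h
      exact Or.inr ((iInf_le c i).trans hi)
    · push_neg at h
      refine Or.inl (iSup_le fun i => ?_)
      rcases hsplitM i u hu with h' | h'
      · exact h'
      · exact absurd h' (h i)
  -- dichotomies for (⨅ a, ⨆ c)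
  have hD1' : ∀ p : L, SupIrred p → p ≤ ⨅ i, a i ∨ p ≤ ⨆ i, c i := by
    intro p hp
    by_cases h : ∃ i, p ≤ c i
    · obtain ⟨i, hi⟩ := h
      exact Or.inr (hi.trans (le_iSup c i))
    · push_neg at h
      refine Or.inl (le_iInf fun i => ?_)
      rcases hsplitJ i p hp with h' | h'
      · exact h'
      · exact absurd h' (h i)
  have hD2' : ∀ u : L, InfIrred u → (⨅ i, a i) ≤ u ∨ (⨆ i, c i) ≤ u := by
    intro u hu
    by_cases h : ∃ i, a i ≤ u
    · obtain ⟨i, hi⟩ := h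
      exact Or.inl ((iInf_le a i).trans hi)
    · push_neg at h
      refine Or.inr (iSup_le fun i => ?_)
      rcases hsplitM i u hu with h' | h'
      · exact absurd h' (h i)
      · exact h'
  obtain ⟨hbot, htop, hcen⟩ := key_aux hFS hDFS _ _ hD1 hD2
  obtain ⟨_, _, hcen'⟩ := key_aux hFS hDFS _ _ hD1' hD2'
  exact ⟨hcen, hcen', hbot, htop⟩
end

section
/- Every finitely bi-spatial complete lattice is isomorphic to a direct product of directly indecomposable lattices. -/
universe u

namespace TotDecAux

open Set

/-! ### Generic transfer lemmas -/

theorem supIrred_map {α β : Type*} [Lattice α] [Lattice β] (f : α ≃o β) {a : α}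
    (h : SupIrred a) : SupIrred (f a) := by
  constructor
  · intro hmin
    refine h.1 fun b hb => ?_
    have := hmin (f.le_iff_le.2 hb)
    exact f.le_iff_le.1 this
  · intro b c hbc
    have hb : f.symm b ⊔ f.symm c = a := by
      rw [← f.symm.map_sup, hbc, f.symm_apply_apply]
    rcases h.2 hb with h' | h'
    · left; rw [← h', f.apply_symm_apply]
    · right; rw [← h', f.apply_symm_apply]

theorem infIrred_map {α β : Type*} [Lattice α] [Lattice β] (f : α ≃o β) {a : α}
    (h : InfIrred a) : InfIrred (f a) := by
  constructor
  · intro hmax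
    refine h.1 fun b hb => ?_
    have := hmax (f.le_iff_le.2 hb)
    exact f.le_iff_le.1 this
  · intro b c hbc
    have hb : f.symm b ⊓ f.symm c = a := by
      rw [← f.symm.map_inf, hbc, f.symm_apply_apply]
    rcases h.2 hb with h' | h'
    · left; rw [← h', f.apply_symm_apply]
    · right; rw [← h', f.apply_symm_apply]

theorem supIrred_prod {A B : Type*} [Lattice A] [Lattice B] [BoundedOrder A] [BoundedOrder B]
    {x : A × B} (h : SupIrred x) : x.1 = ⊥ ∨ x.2 = ⊥ := by
  have hx : (x.1, (⊥ : B)) ⊔ ((⊥ : A), x.2) = x := by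
    ext <;> simp
  rcases h.2 hx with h' | h'
  · right; rw [← h']
  · left; rw [← h']

theorem infIrred_prod {A B : Type*} [Lattice A] [Lattice B] [BoundedOrder A] [BoundedOrder B]
    {x : A × B} (h : InfIrred x) : x.1 = ⊤ ∨ x.2 = ⊤ := by
  have hx : (x.1, (⊤ : B)) ⊓ ((⊤ : A), x.2) = x := by
    ext <;> simp
  rcases h.2 hx with h' | h'
  · right; rw [← h']
  · left; rw [← h']

theorem supIrred_Iic {L : Type u} [CompleteLattice L] {e p : L} (hp : SupIrred p)
    (h : p ≤ e) : SupIrred (⟨p, h⟩ : Iic e) := by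
  constructor
  · intro hmin
    have : (⟨p, h⟩ : Iic e) = ⊥ := isMin_iff_eq_bot.1 hmin
    have hpb : p = ⊥ := congrArg Subtype.val this
    exact hp.1 (by rw [hpb]; exact isMin_bot)
  · intro b c hbc
    have hbc' : (b : L) ⊔ (c : L) = p := congrArg Subtype.val hbc
    rcases hp.2 hbc' with h' | h'
    · exact Or.inl (Subtype.ext h')
    · exact Or.inr (Subtype.ext h')

/-! ### The component decomposition -/

variable {L : Type u} [CompleteLattice L]

/-- The type of sup-irreducible elements. -/
def P (L : Type u) [CompleteLattice L] : Type u := {p : L // SupIrred p}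

/-- Two sup-irreducibles are adjacent if some inf-irreducible is above neither. -/
def rel (L : Type u) [CompleteLattice L] (p q : P L) : Prop :=
  ∃ w : L, InfIrred w ∧ ¬(p.1 ≤ w) ∧ ¬(q.1 ≤ w)

theorem rel_symm {p q : P L} (h : rel L p q) : rel L q p := by
  obtain ⟨w, hw, h1, h2⟩ := h; exact ⟨w, hw, h2, h1⟩

/-- Connected components of the adjacency graph. -/
def Idx (L : Type u) [CompleteLattice L] : Type u := Quot (rel L)

/-- The component of a sup-irreducible. -/
def cls (p : P L) : Idx L := Quot.mk _ p

/-- The join of all sup-irreducibles in a given component. -/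
def ee (i : Idx L) : L := sSup {x : L | ∃ h : SupIrred x, cls ⟨x, h⟩ = i}

theorem le_ee (p : P L) : p.1 ≤ ee (cls p) := le_sSup ⟨p.2, rfl⟩

theorem edge_exists (hDFS : DuallyFinitelySpatial L) (p : P L) :
    ∃ w : L, InfIrred w ∧ ¬(p.1 ≤ w) := by
  by_contra hcon
  push_neg at hcon
  have hle : p.1 ≤ ⊥ := (hDFS ⊥).2 fun w hw => hcon w hw.1
  exact p.2.1 (by rw [le_bot_iff.1 hle]; exact isMin_bot)

theorem sep {p q : P L} {w : L} (hpw : ¬(p.1 ≤ w)) (hne : cls q ≠ cls p)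
    (hw : InfIrred w) : q.1 ≤ w := by
  by_contra hq
  exact hne (Quot.sound ⟨w, hw, hq, hpw⟩)

theorem ee_le {i : Idx L} {w : L} (hw : InfIrred w) (h : ∀ p : P L, cls p = i → p.1 ≤ w) :
    ee i ≤ w := by
  refine sSup_le ?_
  rintro x ⟨hx, hcls⟩
  exact h ⟨x, hx⟩ hcls

theorem cls_of_le_ee (hDFS : DuallyFinitelySpatial L) {p : P L} {i : Idx L}
    (h : p.1 ≤ ee i) : cls p = i := by
  by_contra hne
  obtain ⟨w, hw, hpw⟩ := edge_exists hDFS p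
  have : ee i ≤ w := ee_le hw fun q hq => sep hpw (by rw [hq]; exact fun h' => hne h'.symm) hw
  exact hpw (h.trans this)

theorem keyC (hDFS : DuallyFinitelySpatial L) (u : Idx L → L) (hu : ∀ j, u j ≤ ee j)
    (i : Idx L) : ee i ⊓ (⨆ j, u j) ≤ u i := by
  refine (hDFS (u i)).2 ?_
  rintro w ⟨hw, hui⟩
  by_cases hcase : ∃ p : P L, cls p = i ∧ ¬(p.1 ≤ w)
  · obtain ⟨p₀, hcls, hpw⟩ := hcase
    refine inf_le_of_right_le (iSup_le fun j => ?_)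
    by_cases hj : j = i
    · rw [hj]; exact hui
    · refine (hu j).trans (ee_le hw fun q hq => sep hpw ?_ hw)
      rw [hq, hcls]; exact hj
  · push_neg at hcase
    exact inf_le_of_left_le (ee_le hw hcase)

theorem keyD (hFS : FinitelySpatial L) (x : L) : x = ⨆ i, x ⊓ ee i := by
  refine le_antisymm ?_ (iSup_le fun i => inf_le_left)
  refine (hFS x).2 ?_
  rintro p ⟨hp, hpx⟩
  have : p ≤ x ⊓ ee (cls ⟨p, hp⟩) := le_inf hpx (le_ee ⟨p, hp⟩)
  exact this.trans (le_iSup (fun i => x ⊓ ee i) (cls ⟨p, hp⟩))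

theorem key8 (hDFS : DuallyFinitelySpatial L) {u : Idx L → L} (hu : ∀ j, u j ≤ ee j)
    (i : Idx L) : (⨆ j, u j) ⊓ ee i = u i :=
  le_antisymm (by rw [inf_comm]; exact keyC hDFS u hu i)
    (le_inf (le_iSup _ i) (hu i))

theorem key_inf (hFS : FinitelySpatial L) (hDFS : DuallyFinitelySpatial L)
    {u v : Idx L → L} (hu : ∀ j, u j ≤ ee j) (hv : ∀ j, v j ≤ ee j) :
    (⨆ j, u j) ⊓ (⨆ j, v j) = ⨆ j, u j ⊓ v j := by
  refine le_antisymm ?_ (iSup_le fun j => inf_le_inf (le_iSup _ j) (le_iSup _ j))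
  calc (⨆ j, u j) ⊓ (⨆ j, v j)
      = ⨆ i, ((⨆ j, u j) ⊓ (⨆ j, v j)) ⊓ ee i := keyD hFS _
    _ ≤ ⨆ i, u i ⊓ v i := by
        refine iSup_mono fun i => ?_
        have h1 : ((⨆ j, u j) ⊓ (⨆ j, v j)) ⊓ ee i ≤
            ((⨆ j, u j) ⊓ ee i) ⊓ ((⨆ j, v j) ⊓ ee i) := by
          refine le_inf (inf_le_inf_right _ inf_le_left) (inf_le_inf_right _ inf_le_right)
        rw [key8 hDFS hu i, key8 hDFS hv i] at h1
        exact h1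

/-- The decomposition order isomorphism. -/
noncomputable def phi (hFS : FinitelySpatial L) (hDFS : DuallyFinitelySpatial L) :
    L ≃o ∀ i : Idx L, Iic (ee i) where
  toFun x i := ⟨x ⊓ ee i, inf_le_right⟩
  invFun u := ⨆ i, ((u i : L))
  left_inv x := (keyD hFS x).symm
  right_inv u := by
    funext i
    exact Subtype.ext (key8 hDFS (fun j => (u j).2) i)
  map_rel_iff' := by
    intro x y
    constructor
    · intro h
      calc x = ⨆ i, x ⊓ ee i := keyD hFS x
        _ ≤ ⨆ i, y ⊓ ee i := iSup_mono fun i => Subtype.mk_le_mk.1 (h i)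
        _ = y := (keyD hFS y).symm
    · intro h i
      exact Subtype.mk_le_mk.2 (inf_le_inf_right _ h)

theorem exists_supIrred_le (hFS : FinitelySpatial L) {x : L} (hx : x ≠ ⊥) :
    ∃ p : L, SupIrred p ∧ p ≤ x := by
  by_contra hcon
  push_neg at hcon
  have : x ≤ ⊥ := (hFS x).2 fun p hp => absurd hp.2 (hcon p hp.1)
  exact hx (le_bot_iff.1 this)

/-- The truncation of an inf-irreducible belonging to a component is inf-irreducible in
the corresponding interval. -/
theorem infIrred_trunc (hFS : FinitelySpatial L) (hDFS : DuallyFinitelySpatial L)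
    {w : L} (hw : InfIrred w) {p₀ : P L} {i : Idx L} (hcls : cls p₀ = i)
    (hpw : ¬(p₀.1 ≤ w)) : InfIrred (⟨w ⊓ ee i, inf_le_right⟩ : Iic (ee i)) := by
  classical
  constructor
  · intro hmax
    have htop : (⟨w ⊓ ee i, inf_le_right⟩ : Iic (ee i)) = ⊤ := isMax_iff_eq_top.1 hmax
    have : w ⊓ ee i = ee i := congrArg Subtype.val htop
    have hee : ee i ≤ w := by rw [← this]; exact inf_le_left
    exact hpw ((hcls ▸ le_ee p₀).trans hee)
  · rintro x y hxy
    set u : Idx L → L := fun j => if j = i then (x : L) else ee j with hu_def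
    set v : Idx L → L := fun j => if j = i then (y : L) else ee j with hv_def
    have hu : ∀ j, u j ≤ ee j := by
      intro j; simp only [hu_def]; split
      · next h => rw [h]; exact x.2
      · exact le_rfl
    have hv : ∀ j, v j ≤ ee j := by
      intro j; simp only [hv_def]; split
      · next h => rw [h]; exact y.2
      · exact le_rfl
    have hxy' : (x : L) ⊓ (y : L) = w ⊓ ee i := congrArg Subtype.val hxy
    have huv : ∀ j, u j ⊓ v j = if j = i then w ⊓ ee i else ee j := by
      intro j; simp only [hu_def, hv_def]; split
      · exact hxy'
      · exact inf_idem _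
    have hW : w = ⨆ j, (if j = i then w ⊓ ee i else ee j : L) := by
      refine le_antisymm ?_ ?_
      · refine (hFS w).2 ?_
        rintro q ⟨hq, hqw⟩
        by_cases hqi : cls ⟨q, hq⟩ = i
        · have : q ≤ w ⊓ ee i := le_inf hqw (by rw [← hqi]; exact le_ee ⟨q, hq⟩)
          refine this.trans ?_
          have := le_iSup (fun j => (if j = i then w ⊓ ee i else ee j : L)) i
          simpa using this
        · have hle : q ≤ ee (cls ⟨q, hq⟩) := le_ee ⟨q, hq⟩
          refine hle.trans ?_
          have := le_iSup (fun j => (if j = i then w ⊓ ee i else ee j : L)) (cls ⟨q, hq⟩)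
          rw [if_neg hqi] at this
          exact this
      · refine iSup_le fun j => ?_
        split
        · exact inf_le_left
        · next hj =>
            refine ee_le hw fun q hq => sep hpw ?_ hw
            rw [hq, hcls]; exact hj
    have hXY : (⨆ j, u j) ⊓ (⨆ j, v j) = w := by
      rw [key_inf hFS hDFS hu hv]
      simp only [huv]
      exact hW.symm
    rcases hw.2 hXY with hX | hY
    · left
      apply Subtype.ext
      have h8 := key8 hDFS hu i
      rw [hX] at h8
      simp only [hu_def, if_pos rfl] at h8
      exact h8.symm
    · right
      apply Subtype.ext
      have h8 := key8 hDFS hv i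
      rw [hY] at h8
      simp only [hv_def, if_pos rfl] at h8
      exact h8.symm


/-- The main result: any finitely bi-spatial complete lattice is totally decomposable. -/
theorem result (hFS : FinitelySpatial L) (hDFS : DuallyFinitelySpatial L) :
    TotallyDecomposable L := by
  classical
  refine ⟨Idx L, fun i => BddLat.of (Iic (ee i)), ?_, ⟨phi hFS hDFS⟩⟩
  intro i A B hAB
  obtain ⟨Φ⟩ := hAB
  by_contra hcon
  push_neg at hcon
  obtain ⟨hA, hB⟩ := hcon
  have hA' : (⊥ : ↥A) ≠ ⊤ := by
    intro h
    exact (not_subsingleton_iff_nontrivial.2 hA) ⟨fun a b => by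
      have ha : a = ⊥ := le_bot_iff.1 (le_top.trans h.ge)
      have hb : b = ⊥ := le_bot_iff.1 (le_top.trans h.ge)
      rw [ha, hb]⟩
  have hB' : (⊥ : ↥B) ≠ ⊤ := by
    intro h
    exact (not_subsingleton_iff_nontrivial.2 hB) ⟨fun a b => by
      have ha : a = ⊥ := le_bot_iff.1 (le_top.trans h.ge)
      have hb : b = ⊥ := le_bot_iff.1 (le_top.trans h.ge)
      rw [ha, hb]⟩
  let Ψ : (Iic (ee i) : Set L) ≃o ↥A × ↥B := Φ
  -- the element corresponding to `(⊤, ⊥)`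
  set t : (Iic (ee i) : Set L) := Ψ.symm (⊤, ⊥) with ht_def
  have htΦ : Ψ t = (⊤, ⊥) := Ψ.apply_symm_apply _
  have htne : (t : L) ≠ ⊥ := by
    intro h
    have ht0 : t = ⊥ := Subtype.ext h
    rw [ht0, Ψ.map_bot] at htΦ
    exact hA' (congrArg Prod.fst htΦ)
  obtain ⟨p, hp, hpt⟩ := exists_supIrred_le hFS htne
  have hpi : cls ⟨p, hp⟩ = i := cls_of_le_ee hDFS (hpt.trans t.2)
  -- the element corresponding to `(⊥, ⊤)`
  set s : (Iic (ee i) : Set L) := Ψ.symm (⊥, ⊤) with hs_def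
  have hsΦ : Ψ s = (⊥, ⊤) := Ψ.apply_symm_apply _
  have hsne : (s : L) ≠ ⊥ := by
    intro h
    have hs0 : s = ⊥ := Subtype.ext h
    rw [hs0, Ψ.map_bot] at hsΦ
    exact hB' (congrArg Prod.snd hsΦ)
  obtain ⟨q, hq, hqs⟩ := exists_supIrred_le hFS hsne
  have hqi : cls ⟨q, hq⟩ = i := cls_of_le_ee hDFS (hqs.trans s.2)
  -- the "side" predicate
  let SideA : P L → Prop := fun p' =>
    ∃ h : p'.1 ≤ ee i, (Ψ ⟨p'.1, h⟩).2 = ⊥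
  have hstep : ∀ p' q' : P L, rel L p' q' → cls p' = i → (SideA p' ↔ SideA q') := by
    intro p' q' hr hcls
    obtain ⟨w, hw, hp'w, hq'w⟩ := hr
    have hq'cls : cls q' = i := (Quot.sound (rel_symm ⟨w, hw, hp'w, hq'w⟩)).trans hcls
    have hp'le : p'.1 ≤ ee i := hcls ▸ le_ee p'
    have hq'le : q'.1 ≤ ee i := hq'cls ▸ le_ee q'
    set W := Ψ ⟨w ⊓ ee i, inf_le_right⟩ with hW_def
    have hWirr : InfIrred W := infIrred_map Ψ (infIrred_trunc hFS hDFS hw hcls hp'w)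
    have hWdich : W.1 = ⊤ ∨ W.2 = ⊤ := infIrred_prod hWirr
    have claim : ∀ (p'' : P L) (hle : p''.1 ≤ ee i), ¬(p''.1 ≤ w) →
        ((Ψ ⟨p''.1, hle⟩).2 = ⊥ ↔ W.1 ≠ ⊤) := by
      intro p'' hle hnw
      set Pp := Ψ ⟨p''.1, hle⟩ with hPp_def
      have hPirr : SupIrred Pp := supIrred_map Ψ (supIrred_Iic p''.2 hle)
      have hPne : Pp ≠ ⊥ := by
        intro h
        have h2 : (⟨p''.1, hle⟩ : Iic (ee i)) = ⊥ :=
          Ψ.injective (h.trans Ψ.map_bot.symm)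
        exact p''.2.ne_bot (congrArg Subtype.val h2)
      have hnot : ¬ Pp ≤ W := by
        rw [hPp_def, hW_def, Ψ.le_iff_le]
        intro hle2
        exact hnw ((Subtype.mk_le_mk.1 hle2).trans inf_le_left)
      have hdich : Pp.1 = ⊥ ∨ Pp.2 = ⊥ := supIrred_prod hPirr
      by_cases hW1 : W.1 = ⊤
      · have hP2 : ¬(Pp.2 ≤ W.2) := fun h2 =>
          hnot (Prod.le_def.2 ⟨by rw [hW1]; exact le_top, h2⟩)
        constructor
        · intro h; exact absurd (by rw [h]; exact bot_le) hP2
        · intro h; exact (h hW1).elim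
      · have hW2 : W.2 = ⊤ := hWdich.resolve_left hW1
        have hP1 : ¬(Pp.1 ≤ W.1) := fun h1 =>
          hnot (Prod.le_def.2 ⟨h1, by rw [hW2]; exact le_top⟩)
        have hP1b : Pp.1 ≠ ⊥ := fun h => hP1 (by rw [h]; exact bot_le)
        exact iff_of_true (hdich.resolve_left hP1b) hW1
    constructor
    · rintro ⟨h, hh⟩
      have h1 : (Ψ ⟨p'.1, hp'le⟩).2 = ⊥ := hh
      exact ⟨hq'le, (claim q' hq'le hq'w).2 ((claim p' hp'le hp'w).1 h1)⟩
    · rintro ⟨h, hh⟩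
      have h1 : (Ψ ⟨q'.1, hq'le⟩).2 = ⊥ := hh
      exact ⟨hp'le, (claim p' hp'le hp'w).2 ((claim q' hq'le hq'w).1 h1)⟩
  have main : ∀ p' q' : P L, Relation.EqvGen (rel L) p' q' →
      (cls p' = i → (SideA p' ↔ SideA q')) := by
    intro p' q' h
    induction h with
    | rel a b hab => exact fun h => hstep a b hab h
    | refl a => exact fun _ => Iff.rfl
    | symm a b hab ih =>
        intro hb
        have ha : cls a = i := (Quot.eq.2 hab).trans hb
        exact (ih ha).symm
    | trans a b c hab _ ih1 ih2 =>
        intro ha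
        have hb : cls b = i := (Quot.eq.2 hab).symm.trans ha
        exact (ih1 ha).trans (ih2 hb)
  have heqv : Relation.EqvGen (rel L) ⟨p, hp⟩ ⟨q, hq⟩ := Quot.eq.1 (hpi.trans hqi.symm)
  have hple : p ≤ ee i := hpt.trans t.2
  have hSp : SideA ⟨p, hp⟩ := by
    have hle1 : Ψ ⟨p, hple⟩ ≤ (⊤, ⊥) := by
      rw [← htΦ]
      exact Ψ.le_iff_le.2 (Subtype.mk_le_mk.2 (by exact hpt))
    exact ⟨hple, le_bot_iff.1 (Prod.le_def.1 hle1).2⟩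
  have hnSq : ¬ SideA ⟨q, hq⟩ := by
    rintro ⟨h, hh⟩
    have hle1 : Ψ ⟨q, h⟩ ≤ (⊥, ⊤) := by
      rw [← hsΦ]
      exact Ψ.le_iff_le.2 (Subtype.mk_le_mk.2 (by exact hqs))
    have h1 : (Ψ ⟨q, h⟩).1 = ⊥ := le_bot_iff.1 (Prod.le_def.1 hle1).1
    have hbot : Ψ ⟨q, h⟩ = ⊥ := Prod.ext h1 hh
    have h2 : (⟨q, h⟩ : Iic (ee i)) = ⊥ := Ψ.injective (hbot.trans Ψ.map_bot.symm)
    exact hq.ne_bot (congrArg Subtype.val h2)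
  exact hnSq ((main ⟨p, hp⟩ ⟨q, hq⟩ heqv hpi).1 hSp)

end TotDecAux

/-- Every finitely bi-spatial complete lattice is isomorphic to a direct product
of directly indecomposable lattices. -/
theorem totallyDecomposable_of_finitelyBiSpatial {L : Type u} [CompleteLattice L]
    (hFS : FinitelySpatial L) (hDFS : DuallyFinitelySpatial L) :
    TotallyDecomposable L :=
  TotDecAux.result hFS hDFS
end
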